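/- arXiv:2507.22200 — 5 statements merged into one kernel-verified Lean document; each statement's English description precedes it below -/
import Mathlib

section
/- Let H be a real symmetric n×n matrix strictly supported on G, let λ ∈ ℝ and ψ ∈ ℝ^V satisfy Hψ = λψ with dim ker(H − λI) = 1 and ψ_r ≠ 0 for every vertex r, and let C be a frame for the cycle space Z. Then the nodal count satisfies ν(ψ,H) = n_-(H − λI) + n_-(C^⊤ Φ^{-1} C); that is, writing k − 1 = n_-(H − λI) (so λ is the k-th smallest eigenvalue of H), one has ν(ψ,H) = k − 1 + n_-([Φ^{-1}]_Z). -/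
open Matrix

/-- A finite simple graph with a chosen orientation of each edge:
`E` is the edge index type, each edge `e` goes from `src e` to `tgt e`. -/
structure OrientedGraph (V E : Type*) where
  src : E → V
  tgt : E → V
  loopless : ∀ e, src e ≠ tgt e
  edgeInj : ∀ e f, (src e = src f ∧ tgt e = tgt f) ∨ (src e = tgt f ∧ tgt e = src f) → e = f

/-- The underlying simple graph: `r` and `s` are adjacent iff some oriented edge joins them. -/
def OrientedGraph.toSimpleGraph {V E : Type*} (G : OrientedGraph V E) : SimpleGraph V where
  Adj r s := ∃ e, (G.src e = r ∧ G.tgt e = s) ∨ (G.src e = s ∧ G.tgt e = r)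
  symm := by
    constructor
    intro r s h
    obtain ⟨e, h⟩ := h
    exact ⟨e, h.symm⟩
  loopless := by
    constructor
    intro r h
    obtain ⟨e, h⟩ := h
    rcases h with ⟨h1, h2⟩ | ⟨h1, h2⟩ <;> exact G.loopless e (h1.trans h2.symm)

/-- `H` is strictly supported on `G`: off-diagonal entries are nonzero exactly on edges. -/
def OrientedGraph.StrictSupport {V E : Type*} (G : OrientedGraph V E)
    (H : Matrix V V ℝ) : Prop :=
  ∀ r s, r ≠ s → (H r s ≠ 0 ↔ G.toSimpleGraph.Adj r s)

/-- `H` is supported on `G`: off-diagonal nonzero entries occur only on edges. -/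
def OrientedGraph.Support {V E : Type*} (G : OrientedGraph V E)
    (H : Matrix V V ℝ) : Prop :=
  ∀ r s, r ≠ s → H r s ≠ 0 → G.toSimpleGraph.Adj r s

/-- The coboundary map `d : ℝ^V → ℝ^E`, `(dθ)_{(r→s)} = θ_s - θ_r`, as an `E × V` matrix. -/
def OrientedGraph.cob {V E : Type*} [DecidableEq V] (G : OrientedGraph V E) :
    Matrix E V ℝ :=
  Matrix.of fun e v => (if G.tgt e = v then (1 : ℝ) else 0) - (if G.src e = v then (1 : ℝ) else 0)

/-- The cycle space `Z = ker dᵀ ⊆ ℝ^E`. -/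
noncomputable def OrientedGraph.cycleSpace {V E : Type*} [Fintype V] [Fintype E]
    [DecidableEq V] (G : OrientedGraph V E) : Submodule ℝ (E → ℝ) :=
  LinearMap.ker (G.cob)ᵀ.mulVecLin

/-- The diagonal matrix `Φ` on `ℝ^E` with entries `Φ_{(r→s)} = -ψ_r H_{rs} ψ_s`. -/
noncomputable def PhiMat {V E : Type*} [DecidableEq E] (G : OrientedGraph V E)
    (H : Matrix V V ℝ) (ψ : V → ℝ) : Matrix E E ℝ :=
  Matrix.diagonal fun e => -(ψ (G.src e) * H (G.src e) (G.tgt e) * ψ (G.tgt e))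

/-- The nodal count `ν(ψ,H) = #{(r→s) ∈ E : ψ_r H_{rs} ψ_s > 0}`. -/
noncomputable def nodalCount {V E : Type*} (G : OrientedGraph V E)
    (H : Matrix V V ℝ) (ψ : V → ℝ) : ℕ :=
  Nat.card {e : E // 0 < ψ (G.src e) * H (G.src e) (G.tgt e) * ψ (G.tgt e)}

/-- `C` is a frame for the cycle space: its columns form a basis of `Z`. -/
def IsFrame {V E : Type*} [Fintype V] [Fintype E] [DecidableEq V]
    (G : OrientedGraph V E) {β : ℕ} (C : Matrix E (Fin β) ℝ) : Prop :=
  LinearMap.ker C.mulVecLin = ⊥ ∧ LinearMap.range C.mulVecLin = G.cycleSpace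

/-- `n₋(A)`: the number of negative eigenvalues (with multiplicity) of a hermitian matrix. -/
noncomputable def negEig {𝕜 : Type*} [RCLike 𝕜] {m : Type*} [Fintype m] [DecidableEq m]
    (A : Matrix m m 𝕜) : ℕ :=
  if h : A.IsHermitian then Nat.card {i // h.eigenvalues i < 0} else 0

/-- `n₊(A)`: the number of positive eigenvalues (with multiplicity) of a hermitian matrix. -/
noncomputable def posEig {𝕜 : Type*} [RCLike 𝕜] {m : Type*} [Fintype m] [DecidableEq m]
    (A : Matrix m m 𝕜) : ℕ :=
  if h : A.IsHermitian then Nat.card {i // 0 < h.eigenvalues i} else 0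

/-- `n₀(A)`: the number of zero eigenvalues of a hermitian matrix, i.e. `dim ker A`. -/
noncomputable def zeroEig {𝕜 : Type*} [RCLike 𝕜] {m : Type*} [Fintype m] [DecidableEq m]
    (A : Matrix m m 𝕜) : ℕ :=
  Module.finrank 𝕜 (LinearMap.ker A.mulVecLin)

/-- `n₋([A]_W)`: the Morse index (number of negative eigenvalues) of the compression of
a hermitian matrix `A` to the subspace `W`, i.e. the maximal dimension of a subspace of `W`
on which the hermitian form of `A` is negative definite. -/
noncomputable def negIndexOn {𝕜 : Type*} [RCLike 𝕜] {m : Type*} [Fintype m]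
    (A : Matrix m m 𝕜) (W : Submodule 𝕜 (m → 𝕜)) : ℕ :=
  sSup {k : ℕ | ∃ U : Submodule 𝕜 (m → 𝕜), U ≤ W ∧ Module.finrank 𝕜 U = k ∧
    ∀ x ∈ U, x ≠ 0 → RCLike.re (star x ⬝ᵥ A.mulVec x) < 0}

/-- `n₊([A]_W)`: the number of positive eigenvalues of the compression of a hermitian
matrix `A` to the subspace `W`. -/
noncomputable def posIndexOn {𝕜 : Type*} [RCLike 𝕜] {m : Type*} [Fintype m]
    (A : Matrix m m 𝕜) (W : Submodule 𝕜 (m → 𝕜)) : ℕ :=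
  sSup {k : ℕ | ∃ U : Submodule 𝕜 (m → 𝕜), U ≤ W ∧ Module.finrank 𝕜 U = k ∧
    ∀ x ∈ U, x ≠ 0 → 0 < RCLike.re (star x ⬝ᵥ A.mulVec x)}

/-- The linear functional `x ↦ v ⬝ᵥ x`. -/
noncomputable def dotLeft {𝕜 : Type*} [RCLike 𝕜] {m : Type*} [Fintype m] (v : m → 𝕜) :
    (m → 𝕜) →ₗ[𝕜] 𝕜 where
  toFun x := v ⬝ᵥ x
  map_add' x y := by simp [dotProduct_add]
  map_smul' c x := by simp [dotProduct_smul]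

/-- `n₀([A]_W)`: the dimension of the kernel of the compression of `A` to `W`,
i.e. of `{x ∈ W : Ax ⊥ W}`. -/
noncomputable def zeroIndexOn {𝕜 : Type*} [RCLike 𝕜] {m : Type*} [Fintype m]
    (A : Matrix m m 𝕜) (W : Submodule 𝕜 (m → 𝕜)) : ℕ :=
  Module.finrank 𝕜
    ↥(W ⊓ ⨅ y : W, LinearMap.ker ((dotLeft (star (y : m → 𝕜))).comp A.mulVecLin))

/-- Extension of `α ∈ ℝ^E` to an antisymmetric function on pairs of vertices:
`α_{rs} = α_e` if `e = (r→s) ∈ E`, `α_{rs} = -α_e` if `e = (s→r) ∈ E`, and `0` otherwise. -/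
noncomputable def alphaExt {V E : Type*} [Fintype E] [DecidableEq V]
    (G : OrientedGraph V E) (α : E → ℝ) (r s : V) : ℝ :=
  ∑ e : E, ((if G.src e = r ∧ G.tgt e = s then α e else 0) -
            (if G.src e = s ∧ G.tgt e = r then α e else 0))

/-- The phase-perturbed matrix `H_α` with `(H_α)_{rs} = e^{iα_{rs}} H_{rs}` for `r ≠ s`. -/
noncomputable def phaseMat {V E : Type*} [Fintype E] [DecidableEq V]
    (G : OrientedGraph V E) (H : Matrix V V ℝ) (α : E → ℝ) : Matrix V V ℂ :=
  Matrix.of fun r s =>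
    if r = s then (H r r : ℂ)
    else Complex.exp (Complex.I * (alphaExt G α r s : ℂ)) * (H r s : ℂ)


set_option linter.unusedSectionVars false
namespace NodalAux
section Core
variable {m p : Type*} [Fintype m] [Fintype p]



/-- The set of dimensions of negative-definite subspaces. -/
def negSet (A : Matrix m m ℝ) : Set ℕ :=
  {k | ∃ U : Submodule ℝ (m → ℝ), Module.finrank ℝ U = k ∧
    ∀ x ∈ U, x ≠ 0 → x ⬝ᵥ A.mulVec x < 0}

noncomputable def negDim (A : Matrix m m ℝ) : ℕ := sSup (negSet A)

lemma zero_mem_negSet (A : Matrix m m ℝ) : 0 ∈ negSet A :=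
  ⟨⊥, finrank_bot ℝ _, by intro x hx hx0; simp [Submodule.mem_bot] at hx; exact absurd hx hx0⟩

lemma negSet_nonempty (A : Matrix m m ℝ) : (negSet A).Nonempty := ⟨0, zero_mem_negSet A⟩

lemma negSet_bddAbove (A : Matrix m m ℝ) : BddAbove (negSet A) := by
  refine ⟨Fintype.card m, ?_⟩
  rintro k ⟨U, hU, -⟩
  rw [← hU]
  simpa using U.finrank_le

lemma negDim_mem (A : Matrix m m ℝ) : negDim A ∈ negSet A :=
  Nat.sSup_mem (negSet_nonempty A) (negSet_bddAbove A)

lemma le_negDim {A : Matrix m m ℝ} {k : ℕ} (hk : k ∈ negSet A) : k ≤ negDim A :=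
  le_csSup (negSet_bddAbove A) hk

lemma negDim_le {A : Matrix m m ℝ} {k : ℕ} (h : ∀ j ∈ negSet A, j ≤ k) : negDim A ≤ k :=
  csSup_le (negSet_nonempty A) h

/-- finrank of image of a submodule under a map injective on it. -/
lemma finrank_map_of_injOn (f : (p → ℝ) →ₗ[ℝ] (m → ℝ)) (U : Submodule ℝ (p → ℝ))
    (h : ∀ x ∈ U, f x = 0 → x = 0) :
    Module.finrank ℝ (U.map f) = Module.finrank ℝ U := by
  have hinj : Function.Injective (f.comp U.subtype) := by
    rw [← LinearMap.ker_eq_bot]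
    ext ⟨x, hx⟩
    simp only [LinearMap.mem_ker, LinearMap.comp_apply, Submodule.subtype_apply,
      Submodule.mem_bot]
    constructor
    · intro hfx
      exact Subtype.ext (h x hx hfx)
    · intro hx0
      have : x = 0 := by simpa using congrArg (Subtype.val) hx0
      simp [this]
  have := LinearMap.finrank_range_of_inj hinj
  rwa [LinearMap.range_comp, Submodule.range_subtype] at this

/-- Transfer lemma: if the quadratic form of `B` is pulled back from that of `A`
via a linear map, then `negDim B ≤ negDim A`. -/
lemma negDim_le_negDim (B : Matrix p p ℝ) (A : Matrix m m ℝ) (f : (p → ℝ) →ₗ[ℝ] (m → ℝ))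
    (hf : ∀ x, f x ⬝ᵥ A.mulVec (f x) = x ⬝ᵥ B.mulVec x) :
    negDim B ≤ negDim A := by
  apply negDim_le
  rintro j ⟨U, hU, hneg⟩
  apply le_negDim (A := A)
  have hinj : ∀ x ∈ U, f x = 0 → x = 0 := by
    intro x hx hfx
    by_contra hx0
    have := hneg x hx hx0
    rw [← hf x, hfx] at this
    simp at this
  refine ⟨U.map f, by rw [finrank_map_of_injOn f U hinj, hU], ?_⟩
  rintro y ⟨x, hx, rfl⟩ hy0
  have hx0 : x ≠ 0 := by rintro rfl; simp at hy0
  rw [hf x]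
  exact hneg x hx hx0




variable [DecidableEq m]

/-- The coordinate subspace of vectors supported on `{i | q i}`. -/
def coordSub (q : m → Prop) [DecidablePred q] : Submodule ℝ (m → ℝ) where
  carrier := {x | ∀ i, ¬ q i → x i = 0}
  add_mem' := by intro a b ha hb i hi; simp [ha i hi, hb i hi]
  zero_mem' := by intro i _; rfl
  smul_mem' := by intro c a ha i hi; simp [ha i hi]

noncomputable def coordEquiv (q : m → Prop) [DecidablePred q] :
    coordSub q ≃ₗ[ℝ] ({i // q i} → ℝ) where
  toFun x := fun i => (x : m → ℝ) i.1
  map_add' x y := rfl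
  map_smul' c x := rfl
  invFun y := ⟨fun i => if h : q i then y ⟨i, h⟩ else 0, by
    intro i hi; simp [hi]⟩
  left_inv := by
    rintro ⟨x, hx⟩
    ext i
    by_cases h : q i <;> simp [h]
    exact (hx i h).symm
  right_inv := by
    intro y; ext ⟨i, hi⟩; simp [hi]

lemma finrank_coordSub (q : m → Prop) [DecidablePred q] :
    Module.finrank ℝ (coordSub q) = Nat.card {i // q i} := by
  rw [(coordEquiv q).finrank_eq, Module.finrank_pi, Nat.card_eq_fintype_card]

lemma qf_diagonal (v : m → ℝ) (x : m → ℝ) :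
    x ⬝ᵥ (diagonal v).mulVec x = ∑ i, v i * (x i)^2 := by
  simp [dotProduct, mulVec_diagonal]
  congr 1; ext i; ring

lemma negDim_diagonal (v : m → ℝ) : negDim (diagonal v) = Nat.card {i // v i < 0} := by
  apply le_antisymm
  · apply negDim_le
    rintro j ⟨U, hU, hneg⟩
    -- U ⊓ P = ⊥ where P = coordSub (¬ v i < 0)
    have hdisj : U ⊓ coordSub (fun i => ¬ v i < 0) = ⊥ := by
      rw [Submodule.eq_bot_iff]
      rintro x ⟨hxU, hxP⟩
      by_contra hx0
      have h1 := hneg x hxU hx0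
      have h2 : 0 ≤ x ⬝ᵥ (diagonal v).mulVec x := by
        rw [qf_diagonal]
        apply Finset.sum_nonneg
        intro i _
        by_cases h : v i < 0
        · have := hxP i (by simpa using h); simp [this]
        · push_neg at h
          positivity
      linarith
    have hsum := Submodule.finrank_sup_add_finrank_inf_eq U (coordSub (fun i => ¬ v i < 0))
    rw [hdisj, finrank_bot ℝ (m → ℝ), add_zero, finrank_coordSub] at hsum
    have hle : Module.finrank ℝ ↥(U ⊔ coordSub fun i => ¬ v i < 0) ≤ Fintype.card m := by
      have := Submodule.finrank_le (U ⊔ coordSub fun i => ¬ v i < 0)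
      simpa [Module.finrank_pi] using this
    have h1 := Fintype.card_subtype_compl (fun i => v i < 0)
    have h2 := Fintype.card_subtype_le (fun i => v i < 0)
    simp only [Nat.card_eq_fintype_card] at hsum ⊢
    omega
  · apply le_negDim (A := diagonal v)
    refine ⟨coordSub (fun i => v i < 0), finrank_coordSub _, ?_⟩
    intro x hx hx0
    rw [qf_diagonal]
    have hex : ∃ j, x j ≠ 0 := by
      by_contra h
      push_neg at h
      exact hx0 (funext h)
    obtain ⟨j, hj⟩ := hex
    have hvj : v j < 0 := by
      by_contra h
      exact hj (hx j h)
    have : ∀ i ∈ Finset.univ, v i * (x i)^2 ≤ 0 := by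
      intro i _
      by_cases h : v i < 0
      · nlinarith [sq_nonneg (x i)]
      · rw [hx i h]; simp
    calc ∑ i, v i * (x i)^2 < ∑ _i : m, (0:ℝ) := by
          apply Finset.sum_lt_sum this
          exact ⟨j, Finset.mem_univ j, by nlinarith [pow_pos (abs_pos.mpr hj) 2, sq_abs (x j)]⟩
      _ = 0 := by simp

lemma ker_diagonal_eq (v : m → ℝ) :
    LinearMap.ker (diagonal v).mulVecLin = coordSub (fun i => v i = 0) := by
  ext x
  simp only [LinearMap.mem_ker, mulVecLin_apply]
  constructor
  · intro h i hi
    have := congrFun h i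
    rw [mulVec_diagonal] at this
    simpa [hi] using mul_eq_zero.mp this
  · intro h
    ext i
    rw [mulVec_diagonal]
    by_cases hi : v i = 0
    · simp [hi]
    · simp [h i hi]

lemma finrank_ker_diagonal (v : m → ℝ) :
    Module.finrank ℝ (LinearMap.ker (diagonal v).mulVecLin) = Nat.card {i // v i = 0} := by
  rw [ker_diagonal_eq, finrank_coordSub]

lemma qf_conj (A : Matrix m m ℝ) (S : Matrix m p ℝ) (x : p → ℝ) :
    x ⬝ᵥ (Sᵀ * A * S).mulVec x = (S.mulVec x) ⬝ᵥ A.mulVec (S.mulVec x) := by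
  rw [← mulVec_mulVec, ← mulVec_mulVec, dotProduct_mulVec, vecMul_transpose]

/-- The linear equivalence coming from a pair of mutually inverse matrices. -/
noncomputable def mulVecEquiv (S T : Matrix m m ℝ) (hST : S * T = 1) (hTS : T * S = 1) :
    (m → ℝ) ≃ₗ[ℝ] (m → ℝ) :=
  LinearEquiv.ofLinear S.mulVecLin T.mulVecLin
    (by rw [← mulVecLin_mul, hST, mulVecLin_one])
    (by rw [← mulVecLin_mul, hTS, mulVecLin_one])

lemma negDim_conj (A : Matrix m m ℝ) (S T : Matrix m m ℝ) (hST : S * T = 1) (hTS : T * S = 1) :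
    negDim (Sᵀ * A * S) = negDim A := by
  apply le_antisymm
  · apply negDim_le_negDim _ _ S.mulVecLin
    intro x
    rw [qf_conj]
    rfl
  · apply negDim_le_negDim _ _ T.mulVecLin
    intro x
    rw [qf_conj]
    simp only [mulVecLin_apply, mulVec_mulVec, hST, one_mulVec]

lemma finrank_ker_conj (A : Matrix m m ℝ) (S T : Matrix m m ℝ)
    (hST : S * T = 1) (hTS : T * S = 1) :
    Module.finrank ℝ (LinearMap.ker (Sᵀ * A * S).mulVecLin) =
      Module.finrank ℝ (LinearMap.ker A.mulVecLin) := by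
  have hkey : LinearMap.ker (Sᵀ * A * S).mulVecLin =
      Submodule.comap (mulVecEquiv S T hST hTS : (m → ℝ) →ₗ[ℝ] (m → ℝ))
        (LinearMap.ker A.mulVecLin) := by
    ext x
    simp only [LinearMap.mem_ker, Submodule.mem_comap, mulVecLin_apply]
    show (Sᵀ * A * S).mulVec x = 0 ↔ A.mulVec (S.mulVec x) = 0
    constructor
    · intro h
      have h3 : Tᵀ * (Sᵀ * A * S) = A * S := by
        rw [← mul_assoc, ← mul_assoc, ← transpose_mul, hST, transpose_one, one_mul]
      have h4 : (Tᵀ * (Sᵀ * A * S)) *ᵥ x = 0 := by rw [← mulVec_mulVec, h, mulVec_zero]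
      rw [h3] at h4
      rw [mulVec_mulVec]
      exact h4
    · intro h
      rw [← mulVec_mulVec, ← mulVec_mulVec, h, mulVec_zero]
  rw [hkey, Submodule.comap_equiv_eq_map_symm]
  exact LinearEquiv.finrank_map_eq _ _

lemma isHermitian_iff_isSymm {A : Matrix m m ℝ} : A.IsHermitian ↔ A.IsSymm := by
  rw [Matrix.IsHermitian, conjTranspose_eq_transpose_of_trivial, Matrix.IsSymm]

lemma inertia (M : Matrix m m ℝ) (hM : M.IsHermitian) :
    negDim M = Nat.card {i // hM.eigenvalues i < 0} ∧
    negDim (-M) = Nat.card {i // 0 < hM.eigenvalues i} ∧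
    Module.finrank ℝ (LinearMap.ker M.mulVecLin) = Nat.card {i // hM.eigenvalues i = 0} := by
  have hspec := hM.spectral_theorem
  have hofReal : (RCLike.ofReal ∘ hM.eigenvalues : m → ℝ) = hM.eigenvalues := by
    ext i; simp
  rw [hofReal] at hspec
  set U : Matrix m m ℝ := (hM.eigenvectorUnitary : Matrix m m ℝ) with hUdef
  have hstar : star U = Uᵀ := by
    rw [Matrix.star_eq_conjTranspose, conjTranspose_eq_transpose_of_trivial]
  have hU1 : U * star U = 1 := (Matrix.mem_unitaryGroup_iff).mp hM.eigenvectorUnitary.2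
  have hU2 : star U * U = 1 := (Matrix.mem_unitaryGroup_iff').mp hM.eigenvectorUnitary.2
  have hM' : M = (star U)ᵀ * diagonal hM.eigenvalues * (star U) := by
    rw [hstar, transpose_transpose]; exact hspec
  have hMneg : -M = (star U)ᵀ * (-(diagonal hM.eigenvalues)) * (star U) := by
    have := congrArg Neg.neg hM'
    rw [this]; noncomm_ring
  have hdn : -(diagonal hM.eigenvalues) = diagonal (fun i => -hM.eigenvalues i) := by
    ext i j
    by_cases h : i = j <;> simp [Matrix.diagonal_apply, h]
  refine ⟨?_, ?_, ?_⟩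
  · rw [congrArg negDim hM', negDim_conj _ _ U hU2 hU1, negDim_diagonal]
  · rw [congrArg negDim hMneg, hdn, negDim_conj _ _ U hU2 hU1, negDim_diagonal]
    exact Nat.card_congr (Equiv.subtypeEquivRight (by intro i; simp [neg_lt_zero]))
  · rw [congrArg (fun X : Matrix m m ℝ => Module.finrank ℝ (LinearMap.ker X.mulVecLin)) hM',
      finrank_ker_conj _ _ U hU2 hU1, finrank_ker_diagonal]

lemma negEig_eq_negDim (M : Matrix m m ℝ) (hM : M.IsHermitian) : negEig M = negDim M := by
  rw [negEig, dif_pos hM, (inertia M hM).1]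

lemma inertia_sum (M : Matrix m m ℝ) (hM : M.IsHermitian) :
    negDim M + negDim (-M) + Module.finrank ℝ (LinearMap.ker M.mulVecLin)
      = Fintype.card m := by
  obtain ⟨e1, e2, e3⟩ := inertia M hM
  rw [e1, e2, e3]
  simp only [Nat.card_eq_fintype_card, Fintype.card_subtype]
  have hdisj : Disjoint (Finset.univ.filter fun i => 0 < hM.eigenvalues i)
      (Finset.univ.filter fun i => hM.eigenvalues i = 0) := by
    rw [Finset.disjoint_filter]
    intro i _ h h'
    rw [h'] at h
    exact lt_irrefl 0 h
  have hsplit : (Finset.univ.filter fun i => ¬ hM.eigenvalues i < 0) =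
      (Finset.univ.filter fun i => 0 < hM.eigenvalues i) ∪
      (Finset.univ.filter fun i => hM.eigenvalues i = 0) := by
    ext i
    simp only [Finset.mem_filter, Finset.mem_union, Finset.mem_univ, true_and]
    constructor
    · intro h
      rcases lt_trichotomy (hM.eigenvalues i) 0 with h' | h' | h'
      · exact absurd h' h
      · exact Or.inr h'
      · exact Or.inl h'
    · rintro (h | h)
      · linarith
      · rw [h]; exact lt_irrefl 0
  have hc := Finset.card_filter_add_card_filter_not (p := fun i => hM.eigenvalues i < 0)
    (s := (Finset.univ : Finset m))
  rw [hsplit, Finset.card_union_of_disjoint hdisj] at hc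
  rw [Fintype.card, ← hc]
  ring

lemma conj_isSymm (A : Matrix m m ℝ) (S : Matrix m p ℝ) (hA : A.IsSymm) :
    (Sᵀ * A * S).IsSymm := by
  show (Sᵀ * A * S)ᵀ = Sᵀ * A * S
  rw [transpose_mul, transpose_mul, transpose_transpose, hA.eq, Matrix.mul_assoc]
end Core

section Blocks
variable {m₁ m₂ : Type*} [Fintype m₁] [Fintype m₂] [DecidableEq m₁] [DecidableEq m₂]
/-- Extension by zero onto the left factor. -/

def inlMap (m₁ m₂ : Type*) : (m₁ → ℝ) →ₗ[ℝ] (m₁ ⊕ m₂ → ℝ) where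
  toFun u := Sum.elim u 0
  map_add' u v := by ext (i | i) <;> simp
  map_smul' c u := by ext (i | i) <;> simp

def inrMap (m₁ m₂ : Type*) : (m₂ → ℝ) →ₗ[ℝ] (m₁ ⊕ m₂ → ℝ) where
  toFun w := Sum.elim 0 w
  map_add' u v := by ext (i | i) <;> simp
  map_smul' c u := by ext (i | i) <;> simp

lemma inlMap_inj {u : m₁ → ℝ} (h : inlMap m₁ m₂ u = 0) : u = 0 := by
  ext i; exact congrFun h (Sum.inl i)

lemma inrMap_inj {w : m₂ → ℝ} (h : inrMap m₁ m₂ w = 0) : w = 0 := by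
  ext i; exact congrFun h (Sum.inr i)

lemma mem_sup_maps {U₁ : Submodule ℝ (m₁ → ℝ)} {U₂ : Submodule ℝ (m₂ → ℝ)}
    {x : m₁ ⊕ m₂ → ℝ} (hx : x ∈ U₁.map (inlMap m₁ m₂) ⊔ U₂.map (inrMap m₁ m₂)) :
    (x ∘ Sum.inl) ∈ U₁ ∧ (x ∘ Sum.inr) ∈ U₂ ∧ x = Sum.elim (x ∘ Sum.inl) (x ∘ Sum.inr) := by
  rw [Submodule.mem_sup] at hx
  obtain ⟨y, hy, z, hz, rfl⟩ := hx
  obtain ⟨u, hu, rfl⟩ := hy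
  obtain ⟨w, hw, rfl⟩ := hz
  refine ⟨?_, ?_, ?_⟩
  · have : (inlMap m₁ m₂ u + inrMap m₁ m₂ w) ∘ Sum.inl = u := by ext i; simp [inlMap, inrMap]
    rw [this]; exact hu
  · have : (inlMap m₁ m₂ u + inrMap m₁ m₂ w) ∘ Sum.inr = w := by ext i; simp [inlMap, inrMap]
    rw [this]; exact hw
  · ext (i | i) <;> simp

lemma finrank_sup_maps (U₁ : Submodule ℝ (m₁ → ℝ)) (U₂ : Submodule ℝ (m₂ → ℝ)) :
    Module.finrank ℝ ↥(U₁.map (inlMap m₁ m₂) ⊔ U₂.map (inrMap m₁ m₂)) =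
      Module.finrank ℝ U₁ + Module.finrank ℝ U₂ := by
  have hdisj : U₁.map (inlMap m₁ m₂) ⊓ U₂.map (inrMap m₁ m₂) = ⊥ := by
    rw [Submodule.eq_bot_iff]
    rintro x ⟨⟨u, _, rfl⟩, ⟨w, _, hw⟩⟩
    ext (i | i)
    · have := congrFun hw (Sum.inl i)
      simp [inlMap, inrMap] at this ⊢
      exact this.symm
    · simp [inlMap]
  have := Submodule.finrank_sup_add_finrank_inf_eq (U₁.map (inlMap m₁ m₂))
    (U₂.map (inrMap m₁ m₂))
  rw [hdisj, finrank_bot ℝ (m₁ ⊕ m₂ → ℝ), add_zero,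
    finrank_map_of_injOn _ _ (fun x _ h => inlMap_inj h),
    finrank_map_of_injOn _ _ (fun x _ h => inrMap_inj h)] at this
  exact this

lemma qf_fromBlocks (A : Matrix m₁ m₁ ℝ) (B : Matrix m₂ m₂ ℝ) (u : m₁ → ℝ) (w : m₂ → ℝ) :
    (Sum.elim u w) ⬝ᵥ (fromBlocks A 0 0 B).mulVec (Sum.elim u w)
      = u ⬝ᵥ A.mulVec u + w ⬝ᵥ B.mulVec w := by
  rw [fromBlocks_mulVec]
  simp only [zero_mulVec, add_zero, zero_add]
  rw [sumElim_dotProduct_sumElim]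
  simp [Sum.elim_comp_inl, Sum.elim_comp_inr]

lemma negDim_fromBlocks_ge (A : Matrix m₁ m₁ ℝ) (B : Matrix m₂ m₂ ℝ) :
    negDim A + negDim B ≤ negDim (fromBlocks A 0 0 B) := by
  obtain ⟨U₁, hU₁, hneg₁⟩ := negDim_mem A
  obtain ⟨U₂, hU₂, hneg₂⟩ := negDim_mem B
  apply le_negDim (A := fromBlocks A 0 0 B)
  refine ⟨U₁.map (inlMap m₁ m₂) ⊔ U₂.map (inrMap m₁ m₂), by
    rw [finrank_sup_maps, hU₁, hU₂], ?_⟩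
  intro x hx hx0
  obtain ⟨hu, hw, hxe⟩ := mem_sup_maps hx
  rw [hxe, qf_fromBlocks]
  have hor : x ∘ Sum.inl ≠ 0 ∨ x ∘ Sum.inr ≠ 0 := by
    by_contra h
    push_neg at h
    apply hx0
    rw [hxe, h.1, h.2]
    ext (i | i) <;> simp
  have hA : x ∘ Sum.inl ⬝ᵥ A *ᵥ (x ∘ Sum.inl) ≤ 0 := by
    by_cases h2 : x ∘ Sum.inl = 0
    · rw [h2]; simp
    · exact le_of_lt (hneg₁ _ hu h2)
  have hB : x ∘ Sum.inr ⬝ᵥ B *ᵥ (x ∘ Sum.inr) ≤ 0 := by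
    by_cases h2 : x ∘ Sum.inr = 0
    · rw [h2]; simp
    · exact le_of_lt (hneg₂ _ hw h2)
  rcases hor with h | h
  · have h1 := hneg₁ _ hu h
    linarith
  · have h1 := hneg₂ _ hw h
    linarith

lemma ker_fromBlocks_ge (A : Matrix m₁ m₁ ℝ) (B : Matrix m₂ m₂ ℝ) :
    Module.finrank ℝ (LinearMap.ker A.mulVecLin) + Module.finrank ℝ (LinearMap.ker B.mulVecLin)
      ≤ Module.finrank ℝ (LinearMap.ker (fromBlocks A 0 0 B).mulVecLin) := by
  rw [← finrank_sup_maps (LinearMap.ker A.mulVecLin) (LinearMap.ker B.mulVecLin)]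
  apply Submodule.finrank_mono
  intro x hx
  obtain ⟨hu, hw, hxe⟩ := mem_sup_maps hx
  rw [LinearMap.mem_ker, mulVecLin_apply] at hu hw
  rw [LinearMap.mem_ker, mulVecLin_apply, hxe, fromBlocks_mulVec]
  simp only [zero_mulVec, add_zero, zero_add, Sum.elim_comp_inl, Sum.elim_comp_inr, hu, hw]
  ext (i | i) <;> simp


end Blocks

section Graph
variable {V E : Type*} [Fintype V] [Fintype E] [DecidableEq V] [DecidableEq E]




lemma sum_pair_edges (G : OrientedGraph V E) {r s : V} (hrs : r ≠ s) (c : E → ℝ)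
    (hadj : G.toSimpleGraph.Adj r s) :
    ∃ e₀, ((G.src e₀ = r ∧ G.tgt e₀ = s) ∨ (G.src e₀ = s ∧ G.tgt e₀ = r)) ∧
      ∑ e, ((if G.src e = r ∧ G.tgt e = s then c e else 0) +
            (if G.src e = s ∧ G.tgt e = r then c e else 0)) = c e₀ := by
  obtain ⟨e₀, h₀⟩ := hadj
  refine ⟨e₀, h₀, ?_⟩
  have key : ∀ e ∈ Finset.univ, e ≠ e₀ →
      ((if G.src e = r ∧ G.tgt e = s then c e else 0) +
       (if G.src e = s ∧ G.tgt e = r then c e else 0)) = (0 : ℝ) := by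
    intro e _ hne
    have h1 : ¬ (G.src e = r ∧ G.tgt e = s) := by
      rintro ⟨ha, hb⟩
      apply hne
      apply G.edgeInj e e₀
      rcases h₀ with ⟨hc, hd⟩ | ⟨hc, hd⟩
      · exact Or.inl ⟨ha.trans hc.symm, hb.trans hd.symm⟩
      · exact Or.inr ⟨ha.trans hd.symm, hb.trans hc.symm⟩
    have h2 : ¬ (G.src e = s ∧ G.tgt e = r) := by
      rintro ⟨ha, hb⟩
      apply hne
      apply G.edgeInj e e₀
      rcases h₀ with ⟨hc, hd⟩ | ⟨hc, hd⟩
      · exact Or.inr ⟨ha.trans hd.symm, hb.trans hc.symm⟩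
      · exact Or.inl ⟨ha.trans hc.symm, hb.trans hd.symm⟩
    rw [if_neg h1, if_neg h2, add_zero]
  rw [Finset.sum_eq_single e₀ key (fun h => absurd (Finset.mem_univ e₀) h)]
  rcases h₀ with ⟨hc, hd⟩ | ⟨hc, hd⟩
  · have h2 : ¬ (G.src e₀ = s ∧ G.tgt e₀ = r) := by
      rintro ⟨ha, hb⟩
      exact hrs (hb.symm.trans hd)
    rw [if_pos ⟨hc, hd⟩, if_neg h2, add_zero]
  · have h1 : ¬ (G.src e₀ = r ∧ G.tgt e₀ = s) := by
      rintro ⟨ha, hb⟩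
      exact hrs (ha.symm.trans hc)
    rw [if_neg h1, if_pos ⟨hc, hd⟩, zero_add]

lemma sum_over_edges (G : OrientedGraph V E) (r : V) (f : V → ℝ)
    (hf : ∀ s, f s ≠ 0 → G.toSimpleGraph.Adj r s) :
    ∑ s, f s = ∑ e, ((if G.src e = r then f (G.tgt e) else 0) +
                     (if G.tgt e = r then f (G.src e) else 0)) := by
  have step1 : ∑ s, f s = ∑ s, ∑ e,
      ((if G.src e = r ∧ G.tgt e = s then f s else 0) +
       (if G.src e = s ∧ G.tgt e = r then f s else 0)) := by
    apply Finset.sum_congr rfl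
    intro s _
    by_cases hfs : f s = 0
    · rw [hfs]
      symm
      apply Finset.sum_eq_zero
      intro e _
      simp
    · have hadj := hf s hfs
      have hrs : r ≠ s := hadj.ne
      obtain ⟨e₀, -, hsum⟩ := sum_pair_edges G hrs (fun _ => f s) hadj
      exact hsum.symm
  rw [step1, Finset.sum_comm]
  apply Finset.sum_congr rfl
  intro e _
  rw [Finset.sum_add_distrib]
  congr 1
  · by_cases h : G.src e = r
    · simp only [h, true_and]
      rw [Finset.sum_ite_eq]
      simp
    · simp [h]
  · by_cases h : G.tgt e = r
    · simp only [h, and_true]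
      rw [Finset.sum_ite_eq]
      simp
    · simp [h]

lemma cob_mulVec_const (G : OrientedGraph V E) (t : ℝ) :
    G.cob *ᵥ (fun _ => t) = 0 := by
  ext e
  simp only [mulVec, dotProduct, OrientedGraph.cob, of_apply, Pi.zero_apply]
  simp [sub_mul, Finset.sum_sub_distrib, Finset.sum_ite_eq]



lemma cob_phi_cob (G : OrientedGraph V E) (H : Matrix V V ℝ) (hsymm : H.IsSymm)
    (hsupp : ∀ r s, r ≠ s → (H r s ≠ 0 ↔ G.toSimpleGraph.Adj r s))
    (lam : ℝ) (ψ : V → ℝ) (heig : H *ᵥ ψ = lam • ψ) :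
    G.cobᵀ * diagonal (fun e => -(ψ (G.src e) * H (G.src e) (G.tgt e) * ψ (G.tgt e))) * G.cob
      = diagonal ψ * (H - lam • (1 : Matrix V V ℝ)) * diagonal ψ := by
  set φ : E → ℝ := fun e => -(ψ (G.src e) * H (G.src e) (G.tgt e) * ψ (G.tgt e)) with hφdef
  ext r s
  have hL : (G.cobᵀ * diagonal φ * G.cob) r s = ∑ e, G.cob e r * φ e * G.cob e s := by
    rw [mul_apply]
    apply Finset.sum_congr rfl
    intro e _
    rw [mul_diagonal, transpose_apply]
  have hR : (diagonal ψ * (H - lam • (1 : Matrix V V ℝ)) * diagonal ψ) r s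
      = ψ r * ((H r s) - lam * (if r = s then 1 else 0)) * ψ s := by
    rw [mul_diagonal, diagonal_mul]
    simp only [Matrix.sub_apply, Matrix.smul_apply, Matrix.one_apply, smul_eq_mul]
  rw [hL, hR]
  by_cases hrs : r = s
  · subst hrs
    rw [if_pos rfl]
    have stepA : ∀ e, G.cob e r * φ e * G.cob e r =
        (if G.src e = r then φ e else 0) + (if G.tgt e = r then φ e else 0) := by
      intro e
      by_cases h1 : G.src e = r <;> by_cases h2 : G.tgt e = r
      · exact absurd (h1.trans h2.symm) (G.loopless e)
      · have c1 : G.cob e r = -1 := by simp [OrientedGraph.cob, h1, h2]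
        rw [c1, if_pos h1, if_neg h2, add_zero]
        ring
      · have c1 : G.cob e r = 1 := by simp [OrientedGraph.cob, h1, h2]
        rw [c1, if_neg h1, if_pos h2, zero_add]
        ring
      · have c1 : G.cob e r = 0 := by simp [OrientedGraph.cob, h1, h2]
        rw [c1, if_neg h1, if_neg h2, add_zero]
        ring
    set f : V → ℝ := fun v => if v = r then 0 else H r v * ψ v with hfdef
    have hf : ∀ v, f v ≠ 0 → G.toSimpleGraph.Adj r v := by
      intro v hv
      by_cases hvr : v = r
      · simp [hfdef, hvr] at hv
      · have hHrv : H r v ≠ 0 := by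
          intro h0
          apply hv
          simp [hfdef, hvr, h0]
        exact (hsupp r v (fun h => hvr h.symm)).mp hHrv
    have hpoint : ∀ e, (if G.src e = r then φ e else 0) + (if G.tgt e = r then φ e else 0)
        = (-ψ r) * ((if G.src e = r then f (G.tgt e) else 0) +
                    (if G.tgt e = r then f (G.src e) else 0)) := by
      intro e
      by_cases h1 : G.src e = r <;> by_cases h2 : G.tgt e = r
      · exact absurd (h1.trans h2.symm) (G.loopless e)
      · rw [if_pos h1, if_neg h2, if_pos h1, if_neg h2, add_zero, add_zero]
        have hfv : f (G.tgt e) = H r (G.tgt e) * ψ (G.tgt e) := by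
          simp [hfdef, h2]
        rw [hfv]
        simp only [hφdef, h1]
        ring
      · rw [if_neg h1, if_pos h2, if_neg h1, if_pos h2, zero_add, zero_add]
        have hfv : f (G.src e) = H r (G.src e) * ψ (G.src e) := by
          simp [hfdef, h1]
        rw [hfv]
        simp only [hφdef, h2]
        rw [hsymm.apply r (G.src e)]
        ring
      · rw [if_neg h1, if_neg h2, if_neg h1, if_neg h2]
        simp
    have hsum1 : ∑ e, G.cob e r * φ e * G.cob e r = (-ψ r) * ∑ v, f v := by
      rw [Finset.sum_congr rfl (fun e _ => stepA e),
        Finset.sum_congr rfl (fun e _ => hpoint e), ← Finset.mul_sum,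
        ← sum_over_edges G r f hf]
    have hfs : ∑ v, f v = lam * ψ r - H r r * ψ r := by
      have hr := congrFun heig r
      have hrr : ∑ v, H r v * ψ v = lam * ψ r := by
        simpa [mulVec, dotProduct] using hr
      have hfv : ∀ v, f v = H r v * ψ v - (if v = r then H r v * ψ v else 0) := by
        intro v
        by_cases hv : v = r <;> simp [hfdef, hv]
      rw [Finset.sum_congr rfl (fun v _ => hfv v), Finset.sum_sub_distrib,
        Finset.sum_ite_eq' Finset.univ r (fun v => H r v * ψ v), if_pos (Finset.mem_univ r), hrr]
    rw [hsum1, hfs]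
    ring
  · rw [if_neg hrs]
    have hsr' : s ≠ r := Ne.symm hrs
    have stepA : ∀ e, G.cob e r * φ e * G.cob e s =
        ((if G.src e = r ∧ G.tgt e = s then ψ r * H r s * ψ s else 0) +
         (if G.src e = s ∧ G.tgt e = r then ψ r * H r s * ψ s else 0)) := by
      intro e
      by_cases h1 : G.src e = r ∧ G.tgt e = s
      · rw [if_pos h1]
        have h2 : ¬ (G.src e = s ∧ G.tgt e = r) := by
          rintro ⟨a, b⟩
          exact hrs (h1.1.symm.trans a)
        rw [if_neg h2, add_zero]
        obtain ⟨a, b⟩ := h1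
        have htne : G.tgt e ≠ r := by rw [b]; exact hsr'
        have hsne : G.src e ≠ s := by rw [a]; exact hrs
        have c1 : G.cob e r = -1 := by simp [OrientedGraph.cob, a, htne]
        have c2 : G.cob e s = 1 := by simp [OrientedGraph.cob, b, hsne]
        rw [c1, c2]
        simp only [hφdef]
        rw [a, b]
        ring
      · rw [if_neg h1, zero_add]
        by_cases h2 : G.src e = s ∧ G.tgt e = r
        · rw [if_pos h2]
          obtain ⟨a, b⟩ := h2
          have htne : G.tgt e ≠ s := by rw [b]; exact hrs
          have hsne : G.src e ≠ r := by rw [a]; exact hsr'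
          have c1 : G.cob e r = 1 := by simp [OrientedGraph.cob, b, hsne]
          have c2 : G.cob e s = -1 := by simp [OrientedGraph.cob, a, htne]
          rw [c1, c2]
          simp only [hφdef]
          rw [a, b]
          rw [hsymm.apply r s]
          ring
        · rw [if_neg h2]
          by_cases hsr : G.src e = r
          · have ht : G.tgt e ≠ s := fun hh => h1 ⟨hsr, hh⟩
            have hs : G.src e ≠ s := by rw [hsr]; exact hrs
            have c2 : G.cob e s = 0 := by simp [OrientedGraph.cob, ht, hs]
            rw [c2, mul_zero]
          · by_cases htr : G.tgt e = r
            · have hs : G.src e ≠ s := fun hh => h2 ⟨hh, htr⟩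
              have ht : G.tgt e ≠ s := by rw [htr]; exact hrs
              have c2 : G.cob e s = 0 := by simp [OrientedGraph.cob, ht, hs]
              rw [c2, mul_zero]
            · have c1 : G.cob e r = 0 := by simp [OrientedGraph.cob, hsr, htr]
              rw [c1, zero_mul, zero_mul]
    rw [Finset.sum_congr rfl (fun e _ => stepA e)]
    by_cases hH : H r s = 0
    · simp [hH]
    · have hadj := (hsupp r s hrs).mp hH
      obtain ⟨e₀, -, hsum⟩ := sum_pair_edges G hrs (fun _ => ψ r * H r s * ψ s) hadj
      rw [hsum]
      ring


end Graph
end NodalAux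

/-- the oscillation formula
`ν(ψ,H) = n₋(H - λI) + n₋(Cᵀ Φ⁻¹ C) = (k-1) + n₋([Φ⁻¹]_Z)`. -/
theorem nodal_count_formula
    {V E : Type*} [Fintype V] [Fintype E] [DecidableEq V] [DecidableEq E]
    (G : OrientedGraph V E) (hconn : G.toSimpleGraph.Connected)
    (H : Matrix V V ℝ) (hsymm : H.IsSymm) (hsupp : G.StrictSupport H)
    (lam : ℝ) (ψ : V → ℝ) (heig : H.mulVec ψ = lam • ψ)
    (hker : Module.finrank ℝ (LinearMap.ker (H - lam • (1 : Matrix V V ℝ)).mulVecLin) = 1)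
    (hψ : ∀ r, ψ r ≠ 0)
    {β : ℕ} (C : Matrix E (Fin β) ℝ) (hC : IsFrame G C) :
    nodalCount G H ψ =
      negEig (H - lam • (1 : Matrix V V ℝ)) + negEig (Cᵀ * (PhiMat G H ψ)⁻¹ * C) := by
  classical
  have v0 : V := Classical.choice hconn.nonempty
  set φ : E → ℝ := fun e => -(ψ (G.src e) * H (G.src e) (G.tgt e) * ψ (G.tgt e)) with hφdef
  have hφne : ∀ e, φ e ≠ 0 := by
    intro e
    have hadj : G.toSimpleGraph.Adj (G.src e) (G.tgt e) := ⟨e, Or.inl ⟨rfl, rfl⟩⟩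
    have hH := (hsupp (G.src e) (G.tgt e) (G.loopless e)).mpr hadj
    simp only [hφdef, neg_ne_zero]
    exact mul_ne_zero (mul_ne_zero (hψ _) hH) (hψ _)
  set P : Matrix E E ℝ := Matrix.diagonal φ with hPdef
  set Q : Matrix E E ℝ := Matrix.diagonal (fun e => (φ e)⁻¹) with hQdef
  have hPQ : P * Q = 1 := by
    rw [hPdef, hQdef, Matrix.diagonal_mul_diagonal]
    have h : (fun e => φ e * (φ e)⁻¹) = fun _ => (1 : ℝ) :=
      funext fun e => mul_inv_cancel₀ (hφne e)
    rw [h, Matrix.diagonal_one]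
  have hQP : Q * P = 1 := by
    rw [hPdef, hQdef, Matrix.diagonal_mul_diagonal]
    have h : (fun e => (φ e)⁻¹ * φ e) = fun _ => (1 : ℝ) :=
      funext fun e => inv_mul_cancel₀ (hφne e)
    rw [h, Matrix.diagonal_one]
  have hQT : Qᵀ = Q := Matrix.diagonal_transpose _
  have hPhi : PhiMat G H ψ = P := rfl
  have hPhiInv : (PhiMat G H ψ)⁻¹ = Q := by rw [hPhi]; exact Matrix.inv_eq_right_inv hPQ
  set Dψ : Matrix V V ℝ := Matrix.diagonal ψ with hDψdef
  set Dψi : Matrix V V ℝ := Matrix.diagonal (fun r => (ψ r)⁻¹) with hDψidef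
  have hDψ1 : Dψ * Dψi = 1 := by
    rw [hDψdef, hDψidef, Matrix.diagonal_mul_diagonal]
    have h : (fun r => ψ r * (ψ r)⁻¹) = fun _ => (1 : ℝ) :=
      funext fun r => mul_inv_cancel₀ (hψ r)
    rw [h, Matrix.diagonal_one]
  have hDψ2 : Dψi * Dψ = 1 := by
    rw [hDψdef, hDψidef, Matrix.diagonal_mul_diagonal]
    have h : (fun r => (ψ r)⁻¹ * ψ r) = fun _ => (1 : ℝ) :=
      funext fun r => inv_mul_cancel₀ (hψ r)
    rw [h, Matrix.diagonal_one]
  set K : Matrix V V ℝ := H - lam • (1 : Matrix V V ℝ) with hKdef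
  have hKsymm : K.IsSymm := by
    show Kᵀ = K
    rw [hKdef, Matrix.transpose_sub, Matrix.transpose_smul, Matrix.transpose_one, hsymm.eq]
  have key1 : G.cobᵀ * P * G.cob = Dψ * K * Dψ :=
    NodalAux.cob_phi_cob G H hsymm hsupp lam ψ heig
  set d : Matrix E V ℝ := G.cob with hddef
  have hdC : dᵀ * C = 0 := by
    ext v j
    have hcol : (fun e => C e j) ∈ G.cycleSpace := by
      rw [← hC.2]
      refine ⟨Pi.single j 1, ?_⟩
      show C *ᵥ Pi.single j 1 = _
      rw [Matrix.mulVec_single]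
      simp
      rfl
    have h0 : G.cobᵀ *ᵥ (fun e => C e j) = 0 := hcol
    have h1 := congrFun h0 v
    simpa [Matrix.mul_apply, Matrix.mulVec, dotProduct] using h1
  set S : Matrix E (V ⊕ Fin β) ℝ := Matrix.fromCols d (Q * C) with hSdef
  have b12 : dᵀ * P * (Q * C) = 0 := by
    rw [Matrix.mul_assoc dᵀ P (Q * C), ← Matrix.mul_assoc P Q C, hPQ, Matrix.one_mul, hdC]
  have hCd : Cᵀ * d = 0 := by
    have h := congrArg Matrix.transpose hdC
    rwa [Matrix.transpose_mul, Matrix.transpose_transpose, Matrix.transpose_zero] at h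
  have b21 : (Q * C)ᵀ * P * d = 0 := by
    rw [Matrix.transpose_mul, hQT, Matrix.mul_assoc Cᵀ Q P, hQP, Matrix.mul_one, hCd]
  have b22 : (Q * C)ᵀ * P * (Q * C) = Cᵀ * Q * C := by
    rw [Matrix.transpose_mul, hQT, Matrix.mul_assoc Cᵀ Q P, hQP, Matrix.mul_one, ← Matrix.mul_assoc]
  have key2 : Sᵀ * P * S = Matrix.fromBlocks (dᵀ * P * d) 0 0 (Cᵀ * Q * C) := by
    rw [hSdef, Matrix.transpose_fromCols, Matrix.fromRows_mul,
      Matrix.fromRows_mul_fromCols, b12, b21, b22]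
  have hψne : ψ ≠ 0 := fun h => hψ v0 (congrFun h v0)
  have hkerK : LinearMap.ker K.mulVecLin = Submodule.span ℝ {ψ} := by
    symm
    apply Submodule.eq_of_le_of_finrank_eq
    · rw [Submodule.span_le, Set.singleton_subset_iff]
      show ψ ∈ (LinearMap.ker K.mulVecLin : Set (V → ℝ))
      rw [SetLike.mem_coe, LinearMap.mem_ker, Matrix.mulVecLin_apply, hKdef,
        Matrix.sub_mulVec, heig, Matrix.smul_mulVec, Matrix.one_mulVec, sub_self]
    · rw [finrank_span_singleton hψne, hker]
  have hkerS : ∀ x : (V ⊕ Fin β) → ℝ, S *ᵥ x = 0 →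
      x ∈ Submodule.span ℝ {Sum.elim (fun _ => (1 : ℝ)) (0 : Fin β → ℝ)} := by
    intro x hx
    have hxe : x = Sum.elim (x ∘ Sum.inl) (x ∘ Sum.inr) := by ext (i | i) <;> rfl
    rw [hxe, hSdef, Matrix.fromCols_mulVec_sumElim] at hx
    have h1 : (dᵀ * P * d) *ᵥ (x ∘ Sum.inl) + (dᵀ * P * (Q * C)) *ᵥ (x ∘ Sum.inr) = 0 := by
      have h := congrArg (fun y => (dᵀ * P) *ᵥ y) hx
      simpa [Matrix.mulVec_add, Matrix.mulVec_mulVec] using h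
    rw [b12, Matrix.zero_mulVec, add_zero, key1] at h1
    have h2 : K *ᵥ (Dψ *ᵥ (x ∘ Sum.inl)) = 0 := by
      have hDi : Dψi * (Dψ * K * Dψ) = K * Dψ := by
        rw [← mul_assoc Dψi (Dψ * K) Dψ, ← mul_assoc Dψi Dψ K, hDψ2, one_mul]
      have h := congrArg (fun y => Dψi *ᵥ y) h1
      simp only [Matrix.mulVec_mulVec, hDi, Matrix.mulVec_zero] at h
      rw [← Matrix.mulVec_mulVec] at h
      exact h
    have h3 : Dψ *ᵥ (x ∘ Sum.inl) ∈ LinearMap.ker K.mulVecLin := by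
      rw [LinearMap.mem_ker, Matrix.mulVecLin_apply]; exact h2
    rw [hkerK] at h3
    obtain ⟨t, ht⟩ := Submodule.mem_span_singleton.mp h3
    have hθ : (x ∘ Sum.inl) = fun _ => t := by
      ext v
      have hv := congrFun ht v
      simp only [Pi.smul_apply, smul_eq_mul, hDψdef, Matrix.mulVec_diagonal] at hv
      have h7 : ψ v * ((x ∘ Sum.inl) v) = ψ v * t := by
        first
        | linear_combination hv
        | linear_combination -hv
      exact mul_left_cancel₀ (hψ v) h7
    have hd0 : d *ᵥ (x ∘ Sum.inl) = 0 := by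
      rw [hθ, hddef]
      exact NodalAux.cob_mulVec_const G t
    rw [hd0, zero_add] at hx
    have hc0 : x ∘ Sum.inr = 0 := by
      have h5 : C *ᵥ (x ∘ Sum.inr) = 0 := by
        have h := congrArg (fun y => P *ᵥ y) hx
        have hPC : P * (Q * C) = C := by rw [← Matrix.mul_assoc, hPQ, Matrix.one_mul]
        simpa [Matrix.mulVec_mulVec, hPC] using h
      have h6 : x ∘ Sum.inr ∈ LinearMap.ker C.mulVecLin := by
        rw [LinearMap.mem_ker, Matrix.mulVecLin_apply]; exact h5
      rw [hC.1] at h6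
      simpa using h6
    rw [Submodule.mem_span_singleton]
    refine ⟨t, ?_⟩
    ext (i | i)
    · have := congrFun hθ i
      simpa using this.symm
    · have := congrFun hc0 i
      simpa using this.symm
  -- dimension counting
  have hβ : Module.finrank ℝ G.cycleSpace = β := by
    have hinj : Function.Injective C.mulVecLin := LinearMap.ker_eq_bot.mp hC.1
    have h := LinearMap.finrank_range_of_inj hinj
    rw [hC.2] at h
    rw [h]
    simp [Module.finrank_pi]
  have hrankdT : (G.cob)ᵀ.rank + β = Fintype.card E := by
    have h := LinearMap.finrank_range_add_finrank_ker (G.cob)ᵀ.mulVecLin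
    have h2 : Module.finrank ℝ ↥(LinearMap.ker (G.cob)ᵀ.mulVecLin) = β := hβ
    rw [h2] at h
    have e1 : (G.cob)ᵀ.rank = Module.finrank ℝ ↥(LinearMap.range (G.cob)ᵀ.mulVecLin) := rfl
    rw [e1, h]
    simp [Module.finrank_pi]
  have hrankd : G.cob.rank + Module.finrank ℝ ↥(LinearMap.ker G.cob.mulVecLin)
      = Fintype.card V := by
    have h := LinearMap.finrank_range_add_finrank_ker G.cob.mulVecLin
    have e1 : G.cob.rank = Module.finrank ℝ ↥(LinearMap.range G.cob.mulVecLin) := rfl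
    rw [e1, h]
    simp [Module.finrank_pi]
  have hkerd1 : 1 ≤ Module.finrank ℝ ↥(LinearMap.ker G.cob.mulVecLin) := by
    have hmem : (fun _ => (1 : ℝ)) ∈ LinearMap.ker G.cob.mulVecLin := by
      rw [LinearMap.mem_ker, Matrix.mulVecLin_apply]
      exact NodalAux.cob_mulVec_const G 1
    have hne1 : (fun _ => (1 : ℝ) : V → ℝ) ≠ 0 := fun h => one_ne_zero (congrFun h v0)
    have hsp : Submodule.span ℝ {(fun _ => (1 : ℝ) : V → ℝ)} ≤ LinearMap.ker G.cob.mulVecLin := by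
      rw [Submodule.span_le, Set.singleton_subset_iff]
      exact hmem
    calc 1 = Module.finrank ℝ ↥(Submodule.span ℝ {(fun _ => (1 : ℝ) : V → ℝ)}) :=
          (finrank_span_singleton hne1).symm
      _ ≤ _ := Submodule.finrank_mono hsp
  have hE : Fintype.card E + 1 ≤ Fintype.card V + β := by
    have h3 : (G.cob)ᵀ.rank = G.cob.rank := Matrix.rank_transpose _
    omega
  have hkerSfin : Module.finrank ℝ ↥(LinearMap.ker S.mulVecLin) ≤ 1 := by
    have hne : (Sum.elim (fun _ => (1 : ℝ)) (0 : Fin β → ℝ)) ≠ 0 :=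
      fun h => one_ne_zero (congrFun h (Sum.inl v0))
    have hle : LinearMap.ker S.mulVecLin ≤
        Submodule.span ℝ {Sum.elim (fun _ => (1 : ℝ)) (0 : Fin β → ℝ)} := by
      intro x hx
      rw [LinearMap.mem_ker, Matrix.mulVecLin_apply] at hx
      exact hkerS x hx
    calc Module.finrank ℝ ↥(LinearMap.ker S.mulVecLin)
        ≤ Module.finrank ℝ ↥(Submodule.span ℝ {Sum.elim (fun _ => (1 : ℝ)) (0 : Fin β → ℝ)}) :=
          Submodule.finrank_mono hle
      _ = 1 := finrank_span_singleton hne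
  have hSsurj : LinearMap.range S.mulVecLin = ⊤ := by
    have h := LinearMap.finrank_range_add_finrank_ker S.mulVecLin
    have hdom : Module.finrank ℝ ((V ⊕ Fin β) → ℝ) = Fintype.card V + β := by
      simp [Module.finrank_pi]
    rw [hdom] at h
    have hrle : Module.finrank ℝ ↥(LinearMap.range S.mulVecLin) ≤ Module.finrank ℝ (E → ℝ) :=
      Submodule.finrank_le _
    have hEr : Module.finrank ℝ (E → ℝ) = Fintype.card E := Module.finrank_pi ℝ
    apply Submodule.eq_top_of_finrank_eq
    rw [hEr]
    omega
  obtain ⟨g, hg⟩ := S.mulVecLin.exists_rightInverse_of_surjective hSsurj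
  have hgx : ∀ x, S *ᵥ (g x) = x := by
    intro x
    have h := LinearMap.ext_iff.mp hg x
    simpa [Matrix.mulVecLin_apply] using h
  have nd1 : NodalAux.negDim P = NodalAux.negDim (Sᵀ * P * S) := by
    apply le_antisymm
    · apply NodalAux.negDim_le_negDim _ _ g
      intro x
      rw [NodalAux.qf_conj, hgx x]
    · apply NodalAux.negDim_le_negDim _ _ S.mulVecLin
      intro x
      simp only [Matrix.mulVecLin_apply]
      exact (NodalAux.qf_conj P S x).symm
  have hDT : Dψᵀ = Dψ := Matrix.diagonal_transpose _
  have hAeq : dᵀ * P * d = Dψᵀ * K * Dψ := by rw [hDT]; exact key1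
  have nA : NodalAux.negDim (dᵀ * P * d) = NodalAux.negDim K := by
    rw [hAeq]
    exact NodalAux.negDim_conj K Dψ Dψi hDψ1 hDψ2
  have kA : Module.finrank ℝ ↥(LinearMap.ker (dᵀ * P * d).mulVecLin) = 1 := by
    rw [hAeq, NodalAux.finrank_ker_conj K Dψ Dψi hDψ1 hDψ2]
    exact hker
  have hPsymm : P.IsSymm := Matrix.diagonal_transpose _
  have hQsymm : Q.IsSymm := Matrix.diagonal_transpose _
  have hDherm : (Sᵀ * P * S).IsHermitian :=
    NodalAux.isHermitian_iff_isSymm.mpr (NodalAux.conj_isSymm P S hPsymm)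
  have hAherm : (dᵀ * P * d).IsHermitian :=
    NodalAux.isHermitian_iff_isSymm.mpr (NodalAux.conj_isSymm P d hPsymm)
  have hBherm : (Cᵀ * Q * C).IsHermitian :=
    NodalAux.isHermitian_iff_isSymm.mpr (NodalAux.conj_isSymm Q C hQsymm)
  have hKherm : K.IsHermitian := NodalAux.isHermitian_iff_isSymm.mpr hKsymm
  have sumD := NodalAux.inertia_sum (Sᵀ * P * S) hDherm
  have sumA := NodalAux.inertia_sum (dᵀ * P * d) hAherm
  have sumB := NodalAux.inertia_sum (Cᵀ * Q * C) hBherm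
  have hcardD : Fintype.card (V ⊕ Fin β) = Fintype.card V + β := by simp
  rw [hcardD] at sumD
  rw [Fintype.card_fin β] at sumB
  have negblk : NodalAux.negDim (dᵀ * P * d) + NodalAux.negDim (Cᵀ * Q * C)
      ≤ NodalAux.negDim (Sᵀ * P * S) := by
    rw [key2]
    exact NodalAux.negDim_fromBlocks_ge _ _
  have negblkneg : NodalAux.negDim (-(dᵀ * P * d)) + NodalAux.negDim (-(Cᵀ * Q * C))
      ≤ NodalAux.negDim (-(Sᵀ * P * S)) := by
    have hneg : -(Sᵀ * P * S) = Matrix.fromBlocks (-(dᵀ * P * d)) 0 0 (-(Cᵀ * Q * C)) := by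
      rw [key2, Matrix.fromBlocks_neg]
      norm_num
    rw [hneg]
    exact NodalAux.negDim_fromBlocks_ge _ _
  have kerblk : Module.finrank ℝ ↥(LinearMap.ker (dᵀ * P * d).mulVecLin)
      + Module.finrank ℝ ↥(LinearMap.ker (Cᵀ * Q * C).mulVecLin)
      ≤ Module.finrank ℝ ↥(LinearMap.ker (Sᵀ * P * S).mulVecLin) := by
    rw [key2]
    exact NodalAux.ker_fromBlocks_ge _ _
  have final : NodalAux.negDim (Sᵀ * P * S)
      = NodalAux.negDim (dᵀ * P * d) + NodalAux.negDim (Cᵀ * Q * C) := by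
    omega
  have hnod : nodalCount G H ψ = NodalAux.negDim P := by
    rw [hPdef, NodalAux.negDim_diagonal]
    unfold nodalCount
    exact Nat.card_congr (Equiv.subtypeEquivRight (fun e => by
      rw [hφdef]
      simp [neg_lt_zero]))
  rw [hnod, nd1, final, nA]
  congr 1
  · exact (NodalAux.negEig_eq_negDim K hKherm).symm
  · rw [hPhiInv]
    exact (NodalAux.negEig_eq_negDim _ hBherm).symm
end

section
/- Let H be a real symmetric n×n matrix strictly supported on G, let λ ∈ ℝ and ψ ∈ ℝ^V satisfy Hψ = λψ with dim ker(H − λI) = 1 and ψ_r ≠ 0 for every vertex r. Then 0 ≤ ν(ψ,H) − n_-(H − λI) ≤ β; that is, writing k − 1 = n_-(H − λI), the nodal count ν(ψ,H) lies between k − 1 and k − 1 + β. -/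
open Matrix

set_option linter.unusedSectionVars false
set_option maxHeartbeats 1000000
set_option synthInstance.maxHeartbeats 400000
open Module

open Matrix Module

section Spec
variable {m : Type*} [Fintype m] [DecidableEq m]

lemma negEig_eq (A : Matrix m m ℝ) (hA : A.IsHermitian) :
    negEig A = Nat.card {i // hA.eigenvalues i < 0} := by
  rw [negEig, dif_pos hA]

lemma spectral_decomp (A : Matrix m m ℝ) (hA : A.IsHermitian) :
    ∃ S : Matrix m m ℝ, Sᵀ * A * S = diagonal hA.eigenvalues ∧
      S * diagonal hA.eigenvalues * Sᵀ = A := by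
  refine ⟨(hA.eigenvectorUnitary : Matrix m m ℝ), ?_, ?_⟩
  · have h := hA.conjStarAlgAut_star_eigenvectorUnitary
    simp only [Unitary.conjStarAlgAut_star_apply, Unitary.coe_star, star_eq_conjTranspose,
      conjTranspose_eq_transpose_of_trivial] at h
    simpa [RCLike.ofReal_real_eq_id] using h
  · have h := hA.spectral_theorem
    simp only [Unitary.conjStarAlgAut_apply, Unitary.coe_star, star_eq_conjTranspose,
      conjTranspose_eq_transpose_of_trivial] at h
    simp only [RCLike.ofReal_real_eq_id, Function.comp_id, Function.id_comp] at h
    exact h.symm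
end Spec

open Matrix Module

section Aux
variable {m l : Type*} [Fintype m] [Fintype l]

lemma finrank_map_eq_of_injOn (f : (l → ℝ) →ₗ[ℝ] (m → ℝ)) (U : Submodule ℝ (l → ℝ))
    (h : ∀ x ∈ U, f x = 0 → x = 0) :
    finrank ℝ (U.map f) = finrank ℝ U := by
  have h1 := LinearMap.finrank_range_add_finrank_ker (f.comp U.subtype)
  have h2 : LinearMap.range (f.comp U.subtype) = U.map f := by
    rw [LinearMap.range_comp, Submodule.range_subtype]
  have h3 : LinearMap.ker (f.comp U.subtype) = ⊥ := by
    rw [LinearMap.ker_eq_bot']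
    exact fun x hx => Subtype.ext (h x.1 x.2 hx)
  rw [h2, h3] at h1; simpa using h1

lemma quad_congr (M : Matrix m l ℝ) (B : Matrix m m ℝ) (x : l → ℝ) :
    x ⬝ᵥ (Mᵀ * B * M).mulVec x = (M.mulVec x) ⬝ᵥ B.mulVec (M.mulVec x) := by
  rw [← mulVec_mulVec, ← mulVec_mulVec, dotProduct_mulVec, vecMul_transpose]

/-- Pushforward of a negative-definite subspace through a congruence. -/
lemma pushNeg (B : Matrix m m ℝ) (M : Matrix m l ℝ) (U : Submodule ℝ (l → ℝ))
    (hU : ∀ x ∈ U, x ≠ 0 → x ⬝ᵥ (Mᵀ * B * M).mulVec x < 0) :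
    (∀ y ∈ U.map M.mulVecLin, y ≠ 0 → y ⬝ᵥ B.mulVec y < 0) ∧
      finrank ℝ (U.map M.mulVecLin) = finrank ℝ U := by
  constructor
  · rintro y ⟨x, hx, rfl⟩ hy0
    have hx0 : x ≠ 0 := by rintro rfl; simp [Matrix.mulVecLin_apply] at hy0
    have := hU x hx hx0
    rwa [quad_congr] at this
  · refine finrank_map_eq_of_injOn _ _ fun x hx hfx => ?_
    by_contra hx0
    have := hU x hx hx0
    rw [quad_congr] at this
    rw [Matrix.mulVecLin_apply] at hfx
    rw [hfx] at this
    simp at this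

lemma diag_quad [DecidableEq m] (φ : m → ℝ) (x : m → ℝ) :
    x ⬝ᵥ (diagonal φ).mulVec x = ∑ i, φ i * x i ^ 2 := by
  simp only [dotProduct, mulVec_diagonal]
  exact Finset.sum_congr rfl fun i _ => by ring

lemma diag_upper [DecidableEq m] (φ : m → ℝ) (U : Submodule ℝ (m → ℝ))
    (hU : ∀ x ∈ U, x ≠ 0 → x ⬝ᵥ (diagonal φ).mulVec x < 0) :
    finrank ℝ U ≤ Nat.card {i // φ i < 0} := by
  classical
  set f : (m → ℝ) →ₗ[ℝ] ({i // φ i < 0} → ℝ) := LinearMap.funLeft ℝ ℝ Subtype.val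
  have hinj : ∀ x ∈ U, f x = 0 → x = 0 := by
    intro x hx hfx
    by_contra hx0
    have hneg := hU x hx hx0
    rw [diag_quad] at hneg
    have : (0:ℝ) ≤ ∑ i, φ i * x i ^ 2 := by
      apply Finset.sum_nonneg
      intro i _
      by_cases hi : φ i < 0
      · have : x i = 0 := congrFun hfx ⟨i, hi⟩
        simp [this]
      · exact mul_nonneg (not_lt.1 hi) (sq_nonneg _)
    linarith
  have h1 := LinearMap.finrank_range_add_finrank_ker (f.comp U.subtype)
  have h3 : LinearMap.ker (f.comp U.subtype) = ⊥ := by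
    rw [LinearMap.ker_eq_bot']
    exact fun x hx => Subtype.ext (hinj x.1 x.2 hx)
  rw [h3] at h1
  have h4 : finrank ℝ (LinearMap.range (f.comp U.subtype)) ≤ finrank ℝ ({i // φ i < 0} → ℝ) :=
    Submodule.finrank_le _
  rw [Nat.card_eq_fintype_card]
  simp only [finrank_bot, add_zero] at h1
  rw [← h1]
  simpa [Module.finrank_pi] using h4

lemma diag_lower [DecidableEq m] (φ : m → ℝ) :
    ∃ U : Submodule ℝ (m → ℝ), finrank ℝ U = Nat.card {i // φ i < 0} ∧
      ∀ x ∈ U, x ≠ 0 → x ⬝ᵥ (diagonal φ).mulVec x < 0 := by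
  classical
  set f : (m → ℝ) →ₗ[ℝ] ({i // ¬ φ i < 0} → ℝ) := LinearMap.funLeft ℝ ℝ Subtype.val
  refine ⟨LinearMap.ker f, ?_, ?_⟩
  · have h1 := LinearMap.finrank_range_add_finrank_ker f
    have hsurj : LinearMap.range f = ⊤ := by
      rw [LinearMap.range_eq_top]
      exact LinearMap.funLeft_surjective_of_injective ℝ ℝ _ Subtype.val_injective
    rw [hsurj] at h1
    have hcard : Fintype.card {i // ¬ φ i < 0} = Fintype.card m - Fintype.card {i // φ i < 0} :=
      Fintype.card_subtype_compl _
    have hle : Fintype.card {i // φ i < 0} ≤ Fintype.card m := Fintype.card_subtype_le _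
    have h2 : finrank ℝ (⊤ : Submodule ℝ (({i // ¬ φ i < 0} → ℝ))) = Fintype.card {i // ¬ φ i < 0} := by
      simp [Module.finrank_pi]
    have h3 : finrank ℝ (m → ℝ) = Fintype.card m := by simp [Module.finrank_pi]
    rw [Nat.card_eq_fintype_card]
    omega
  · intro x hx hx0
    rw [diag_quad]
    obtain ⟨j, hj⟩ : ∃ j, x j ≠ 0 := Function.ne_iff.1 hx0
    have hmem : ∀ i, ¬ φ i < 0 → x i = 0 := by
      intro i hi
      exact congrFun (LinearMap.mem_ker.1 hx) ⟨i, hi⟩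
    have hφj : φ j < 0 := by
      by_contra hc; exact hj (hmem j hc)
    have : ∑ i, φ i * x i ^ 2 < ∑ i : m, (0:ℝ) := by
      apply Finset.sum_lt_sum
      · intro i _
        by_cases hi : φ i < 0
        · nlinarith [sq_nonneg (x i)]
        · simp [hmem i hi]
      · exact ⟨j, Finset.mem_univ j, by nlinarith [sq_nonneg (x j), pow_pos (abs_pos.2 hj) 2, sq_abs (x j)]⟩
    simpa using this
end Aux

section Spec2
variable {m : Type*} [Fintype m] [DecidableEq m]

lemma subspace_le_negEig (A : Matrix m m ℝ) (hA : A.IsHermitian) (U : Submodule ℝ (m → ℝ))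
    (hU : ∀ x ∈ U, x ≠ 0 → x ⬝ᵥ A.mulVec x < 0) :
    Module.finrank ℝ U ≤ negEig A := by
  obtain ⟨S, hS1, hS2⟩ := spectral_decomp A hA
  have hU' : ∀ x ∈ U, x ≠ 0 → x ⬝ᵥ ((Sᵀ)ᵀ * diagonal hA.eigenvalues * Sᵀ).mulVec x < 0 := by
    intro x hx hx0
    rw [transpose_transpose, hS2]
    exact hU x hx hx0
  obtain ⟨hneg, hrank⟩ := pushNeg (diagonal hA.eigenvalues) Sᵀ U hU'
  rw [negEig_eq A hA, ← hrank]
  exact diag_upper _ _ hneg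

lemma exists_negEig_subspace (A : Matrix m m ℝ) (hA : A.IsHermitian) :
    ∃ U : Submodule ℝ (m → ℝ), Module.finrank ℝ U = negEig A ∧
      ∀ x ∈ U, x ≠ 0 → x ⬝ᵥ A.mulVec x < 0 := by
  obtain ⟨S, hS1, hS2⟩ := spectral_decomp A hA
  obtain ⟨U, hUrank, hUneg⟩ := diag_lower hA.eigenvalues
  have hU' : ∀ x ∈ U, x ≠ 0 → x ⬝ᵥ (Sᵀ * A * S).mulVec x < 0 := by
    intro x hx hx0
    rw [hS1]
    exact hUneg x hx hx0
  obtain ⟨hneg, hrank⟩ := pushNeg A S U hU'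
  exact ⟨U.map S.mulVecLin, by rw [hrank, hUrank, negEig_eq A hA], hneg⟩
end Spec2

section Graph
variable {V E : Type*} [Fintype V] [Fintype E] [DecidableEq V] (G : OrientedGraph V E)

lemma cob_mulVec_apply (x : V → ℝ) (e : E) :
    (G.cob *ᵥ x) e = x (G.tgt e) - x (G.src e) := by
  simp [OrientedGraph.cob, mulVec, dotProduct, sub_mul, Finset.sum_sub_distrib,
    ite_mul, one_mul, zero_mul, Finset.sum_ite_eq]

lemma cob_mulVec_one : G.cob *ᵥ (fun _ => (1:ℝ)) = 0 := by
  funext e; simp [cob_mulVec_apply]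

lemma ker_cob (hconn : G.toSimpleGraph.Connected) :
    LinearMap.ker G.cob.mulVecLin = Submodule.span ℝ {(fun _ => (1:ℝ) : V → ℝ)} := by
  apply le_antisymm
  · intro x hx
    have hx' : G.cob *ᵥ x = 0 := hx
    have hstep : ∀ e, x (G.tgt e) = x (G.src e) := by
      intro e
      have h0 : x (G.tgt e) - x (G.src e) = 0 := by
        simpa [cob_mulVec_apply] using congrFun hx' e
      linarith
    have key : ∀ (a b : V), G.toSimpleGraph.Walk a b → x a = x b := by
      intro a b w
      induction w with
      | nil => rfl
      | cons h p ih =>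
        refine Eq.trans ?_ ih
        obtain ⟨e, he⟩ := h
        rcases he with ⟨h1, h2⟩ | ⟨h1, h2⟩
        · rw [← h1, ← h2]; exact (hstep e).symm
        · rw [← h1, ← h2]; exact hstep e
    obtain ⟨v0⟩ := hconn.nonempty
    have : x = x v0 • (fun _ => (1:ℝ)) := by
      funext r
      have := key r v0 (hconn.preconnected r v0).some
      simp [this]
    rw [this]
    exact Submodule.smul_mem _ _ (Submodule.mem_span_singleton_self _)
  · rw [Submodule.span_le, Set.singleton_subset_iff]
    exact cob_mulVec_one G

lemma finrank_ker_cob (hconn : G.toSimpleGraph.Connected) :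
    finrank ℝ (LinearMap.ker G.cob.mulVecLin) = 1 := by
  rw [ker_cob G hconn]
  apply finrank_span_singleton
  intro h
  obtain ⟨v0⟩ := hconn.nonempty
  have := congrFun h v0
  simp at this
end Graph



section Key
variable {V E : Type*} [Fintype V] [Fintype E] [DecidableEq V] [DecidableEq E]
  (G : OrientedGraph V E) (H : Matrix V V ℝ) (ψ : V → ℝ) (lam : ℝ)

lemma eq_of_offdiag_rowsum (M N : Matrix V V ℝ)
    (h1 : M *ᵥ (fun _ => (1:ℝ)) = 0) (h2 : N *ᵥ (fun _ => (1:ℝ)) = 0)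
    (h : ∀ r s, r ≠ s → M r s = N r s) : M = N := by
  ext r s
  by_cases hrs : r = s
  · subst hrs
    have hm : ∑ t, M r t = 0 := by
      simpa [mulVec, dotProduct] using congrFun h1 r
    have hn : ∑ t, N r t = 0 := by
      simpa [mulVec, dotProduct] using congrFun h2 r
    rw [← Finset.add_sum_erase _ _ (Finset.mem_univ r)] at hm hn
    have : ∑ t ∈ Finset.univ.erase r, M r t = ∑ t ∈ Finset.univ.erase r, N r t :=
      Finset.sum_congr rfl fun t ht => h r t (Ne.symm (Finset.mem_erase.1 ht).1)
    linarith
  · exact h r s hrs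

lemma edge_term (hsymm : H.IsSymm) (r s : V) (hrs : r ≠ s) (e : E) :
    G.cob e r * (-(ψ (G.src e) * H (G.src e) (G.tgt e) * ψ (G.tgt e))) * G.cob e s =
      if (G.src e = r ∧ G.tgt e = s) ∨ (G.src e = s ∧ G.tgt e = r)
        then ψ r * H r s * ψ s else 0 := by
  have hll := G.loopless e
  have hsym : ∀ a b, H a b = H b a := fun a b => hsymm.apply b a
  by_cases h1 : G.src e = r <;> by_cases h2 : G.tgt e = r <;>
    by_cases h3 : G.src e = s <;> by_cases h4 : G.tgt e = s <;>
    simp_all [OrientedGraph.cob] <;> ring_nf <;>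
    first
      | rfl
      | (rw [hsym]; ring)
      | ring

lemma rowsum_lhs (heig : H *ᵥ ψ = lam • ψ) :
    (diagonal ψ * (H - lam • (1 : Matrix V V ℝ)) * diagonal ψ) *ᵥ (fun _ => (1:ℝ)) = 0 := by
  have hψ : diagonal ψ *ᵥ (fun _ => (1:ℝ)) = ψ := by
    funext r; simp [mulVec_diagonal]
  rw [← mulVec_mulVec, ← mulVec_mulVec, hψ, sub_mulVec, heig, smul_mulVec, one_mulVec]
  simp

lemma rowsum_rhs : (G.cobᵀ * PhiMat G H ψ * G.cob) *ᵥ (fun _ => (1:ℝ)) = 0 := by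
  rw [← mulVec_mulVec, ← mulVec_mulVec, cob_mulVec_one]
  simp

lemma key_identity (hsymm : H.IsSymm) (hsupp : G.StrictSupport H)
    (heig : H *ᵥ ψ = lam • ψ) :
    diagonal ψ * (H - lam • (1 : Matrix V V ℝ)) * diagonal ψ = G.cobᵀ * PhiMat G H ψ * G.cob := by
  apply eq_of_offdiag_rowsum
  · exact rowsum_lhs H ψ lam heig
  · exact rowsum_rhs G H ψ
  · intro r s hrs
    have lhs : (diagonal ψ * (H - lam • (1 : Matrix V V ℝ)) * diagonal ψ) r s
        = ψ r * H r s * ψ s := by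
      rw [Matrix.mul_diagonal, Matrix.diagonal_mul, Matrix.sub_apply, Matrix.smul_apply,
        Matrix.one_apply_ne hrs]
      simp
    have rhs : (G.cobᵀ * PhiMat G H ψ * G.cob) r s =
        ∑ e, G.cob e r * (-(ψ (G.src e) * H (G.src e) (G.tgt e) * ψ (G.tgt e))) * G.cob e s := by
      rw [Matrix.mul_apply]
      refine Finset.sum_congr rfl fun e _ => ?_
      rw [PhiMat, Matrix.mul_diagonal]
      rfl
    rw [lhs, rhs]
    rw [Finset.sum_congr rfl fun e _ => edge_term G H ψ hsymm r s hrs e]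
    by_cases hadj : G.toSimpleGraph.Adj r s
    · obtain ⟨e0, he0⟩ := hadj
      rw [Finset.sum_eq_single_of_mem e0 (Finset.mem_univ e0)]
      · rw [if_pos he0]
      · intro e _ hne
        rw [if_neg]
        intro hP
        apply hne
        apply G.edgeInj e e0
        rcases hP with ⟨p1, p2⟩ | ⟨p1, p2⟩ <;> rcases he0 with ⟨q1, q2⟩ | ⟨q1, q2⟩
        · exact Or.inl ⟨p1.trans q1.symm, p2.trans q2.symm⟩
        · exact Or.inr ⟨p1.trans q2.symm, p2.trans q1.symm⟩
        · exact Or.inr ⟨p1.trans q2.symm, p2.trans q1.symm⟩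
        · exact Or.inl ⟨p1.trans q1.symm, p2.trans q2.symm⟩
    · have hH : H r s = 0 := by
        by_contra h0
        exact hadj ((hsupp r s hrs).1 h0)
      rw [hH]
      rw [Finset.sum_eq_zero]
      · ring
      · intro e _
        rw [if_neg]
        intro hP
        exact hadj ⟨e, hP⟩
end Key

/-- the nodal bound `0 ≤ ν(ψ,H) - (k-1) ≤ β` with `β = |E| - |V| + 1`. -/
theorem nodal_count_bound
    {V E : Type*} [Fintype V] [Fintype E] [DecidableEq V] [DecidableEq E]
    (G : OrientedGraph V E) (hconn : G.toSimpleGraph.Connected)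
    (H : Matrix V V ℝ) (hsymm : H.IsSymm) (hsupp : G.StrictSupport H)
    (lam : ℝ) (ψ : V → ℝ) (heig : H.mulVec ψ = lam • ψ)
    (hker : Module.finrank ℝ (LinearMap.ker (H - lam • (1 : Matrix V V ℝ)).mulVecLin) = 1)
    (hψ : ∀ r, ψ r ≠ 0) :
    negEig (H - lam • (1 : Matrix V V ℝ)) ≤ nodalCount G H ψ ∧
      nodalCount G H ψ ≤
        negEig (H - lam • (1 : Matrix V V ℝ)) + (Fintype.card E + 1 - Fintype.card V) := by
  classical
  set A := H - lam • (1 : Matrix V V ℝ) with hAdef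
  have hA : A.IsHermitian := by
    rw [Matrix.IsHermitian, conjTranspose_eq_transpose_of_trivial, transpose_sub,
      transpose_smul, transpose_one, hsymm]
  set φ : E → ℝ := fun e => -(ψ (G.src e) * H (G.src e) (G.tgt e) * ψ (G.tgt e)) with hφdef
  have hPhi : PhiMat G H ψ = diagonal φ := rfl
  have hν : nodalCount G H ψ = Nat.card {e // φ e < 0} := by
    apply Nat.card_congr
    apply (Equiv.subtypeEquivRight _).symm
    intro e
    simp [hφdef, neg_lt_zero]
  set Ψ : Matrix V V ℝ := diagonal ψ with hΨdef
  set Ψi : Matrix V V ℝ := diagonal (fun r => (ψ r)⁻¹) with hΨidef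
  have hinv1 : Ψi * Ψ = 1 := by
    rw [hΨdef, hΨidef, diagonal_mul_diagonal]
    have hfun : (fun i => (ψ i)⁻¹ * ψ i) = fun _ => (1:ℝ) := by
      funext r; exact inv_mul_cancel₀ (hψ r)
    rw [hfun, diagonal_one]
  have hinv2 : Ψ * Ψi = 1 := by
    rw [hΨdef, hΨidef, diagonal_mul_diagonal]
    have hfun : (fun i => ψ i * (ψ i)⁻¹) = fun _ => (1:ℝ) := by
      funext r; exact mul_inv_cancel₀ (hψ r)
    rw [hfun, diagonal_one]
  have key : Ψ * A * Ψ = G.cobᵀ * PhiMat G H ψ * G.cob :=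
    key_identity G H ψ lam hsymm hsupp heig
  have lower : negEig A ≤ nodalCount G H ψ := by
    obtain ⟨U0, hU0rank, hU0neg⟩ := exists_negEig_subspace A hA
    have hA' : Ψi * (Ψ * A * Ψ) * Ψi = A := by
      rw [show Ψi * (Ψ * A * Ψ) * Ψi = (Ψi * Ψ) * A * (Ψ * Ψi) by
        simp only [Matrix.mul_assoc], hinv1, hinv2, one_mul, mul_one]
    have hM : (G.cob * Ψi)ᵀ * PhiMat G H ψ * (G.cob * Ψi) = A := by
      have ht : (G.cob * Ψi)ᵀ = Ψi * G.cobᵀ := by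
        rw [transpose_mul, hΨidef, diagonal_transpose]
      calc (G.cob * Ψi)ᵀ * PhiMat G H ψ * (G.cob * Ψi)
          = Ψi * (G.cobᵀ * PhiMat G H ψ * G.cob) * Ψi := by
            rw [ht]; simp only [Matrix.mul_assoc]
        _ = A := by rw [← key, hA']
    have hU0neg' : ∀ x ∈ U0, x ≠ 0 →
        x ⬝ᵥ ((G.cob * Ψi)ᵀ * PhiMat G H ψ * (G.cob * Ψi)).mulVec x < 0 := by
      intro x hx hx0
      rw [hM]
      exact hU0neg x hx hx0
    obtain ⟨hneg, hrank⟩ := pushNeg (PhiMat G H ψ) (G.cob * Ψi) U0 hU0neg'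
    rw [hν, ← hU0rank, ← hrank]
    apply diag_upper φ
    intro x hx hx0
    have := hneg x hx hx0
    rwa [hPhi] at this
  have upper : nodalCount G H ψ ≤ negEig A + (Fintype.card E + 1 - Fintype.card V) := by
    obtain ⟨U, hUrank, hUneg⟩ := diag_lower φ
    set W := LinearMap.range G.cob.mulVecLin with hWdef
    have hkerd : finrank ℝ (LinearMap.ker G.cob.mulVecLin) = 1 := finrank_ker_cob G hconn
    have hW : finrank ℝ W + 1 = Fintype.card V := by
      have h := LinearMap.finrank_range_add_finrank_ker G.cob.mulVecLin
      rw [hkerd] at h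
      rw [h]
      simp [Module.finrank_pi]
    have hsupinf : finrank ℝ ↥(U ⊔ W) + finrank ℝ ↥(U ⊓ W)
        = finrank ℝ U + finrank ℝ W := Submodule.finrank_sup_add_finrank_inf_eq U W
    have hsup_le : finrank ℝ ↥(U ⊔ W) ≤ Fintype.card E := by
      have h := Submodule.finrank_le (U ⊔ W)
      simpa [Module.finrank_pi] using h
    set P := Submodule.comap G.cob.mulVecLin (U ⊓ W) with hPdef
    have hker_le_P : LinearMap.ker G.cob.mulVecLin ≤ P := by
      intro x hx
      rw [hPdef, Submodule.mem_comap, LinearMap.mem_ker.1 hx]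
      exact Submodule.zero_mem _
    have hP : finrank ℝ ↥P = finrank ℝ ↥(U ⊓ W) + 1 := by
      have h1 := LinearMap.finrank_range_add_finrank_ker (G.cob.mulVecLin.comp P.subtype)
      have h2 : LinearMap.range (G.cob.mulVecLin.comp P.subtype) = U ⊓ W := by
        rw [LinearMap.range_comp, Submodule.range_subtype, hPdef, Submodule.map_comap_eq]
        exact inf_eq_right.2 inf_le_right
      have h3 : finrank ℝ (LinearMap.ker (G.cob.mulVecLin.comp P.subtype)) = 1 := by
        rw [LinearMap.ker_comp, ← hkerd]
        exact LinearEquiv.finrank_eq (Submodule.comapSubtypeEquivOfLe hker_le_P)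
      rw [h2, h3] at h1
      omega
    set kd := Submodule.comap P.subtype (LinearMap.ker G.cob.mulVecLin) with hkddef
    have hkd : finrank ℝ kd = 1 := by
      rw [← hkerd]
      exact LinearEquiv.finrank_eq (Submodule.comapSubtypeEquivOfLe hker_le_P)
    obtain ⟨Qc, hQc⟩ := Submodule.exists_isCompl kd
    have hQcrank : finrank ℝ kd + finrank ℝ Qc = finrank ℝ ↥P :=
      Submodule.finrank_add_eq_of_isCompl hQc
    set K := Submodule.map P.subtype Qc with hKdef
    have hK : finrank ℝ K = finrank ℝ Qc :=
      (LinearEquiv.finrank_eq (Submodule.equivMapOfInjective P.subtype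
        (Submodule.injective_subtype P) Qc)).symm
    have hKneg : ∀ x ∈ K, x ≠ 0 → x ⬝ᵥ (Ψᵀ * A * Ψ).mulVec x < 0 := by
      rintro x ⟨y, hy, rfl⟩ hx0
      have hxP : (y : V → ℝ) ∈ P := y.2
      have hcob : G.cob.mulVecLin (y : V → ℝ) ∈ U ⊓ W := Submodule.mem_comap.1 hxP
      have hcobne : G.cob.mulVecLin (y : V → ℝ) ≠ 0 := by
        intro h0
        have hmem : y ∈ kd := Submodule.mem_comap.2 (LinearMap.mem_ker.2 h0)
        have : y ∈ kd ⊓ Qc := ⟨hmem, hy⟩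
        rw [hQc.inf_eq_bot] at this
        apply hx0
        have hy0 : y = 0 := (Submodule.mem_bot ℝ).1 this
        simp [hy0]
      rw [show Ψᵀ = Ψ from diagonal_transpose ψ, key, quad_congr]
      have h := hUneg (G.cob.mulVec (y : V → ℝ)) hcob.1 hcobne
      rwa [hPhi]
    obtain ⟨hneg2, hrank2⟩ := pushNeg A Ψ K hKneg
    have hfin : finrank ℝ (K.map Ψ.mulVecLin) ≤ negEig A := subspace_le_negEig A hA _ hneg2
    rw [hν, ← hUrank]
    omega
  exact ⟨lower, upper⟩
end

section
/- (Sylvester's law of inertia with a general transformation, kernel part.) Let H be an n×n Hermitian matrix and S an n×m complex matrix. Then n_0(S* H S) = n_0([H]_{Ran S}) + dim ker S. -/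
open Matrix

set_option synthInstance.maxHeartbeats 1000000 in
set_option maxHeartbeats 1000000 in
/-- Sylvester's law, kernel part:
`n₀(Sᴴ H S) = n₀([H]_{Ran S}) + dim ker S`. -/
theorem sylvester_general_transformation_kernel
    {n m : Type*} [Fintype n] [Fintype m] [DecidableEq n] [DecidableEq m]
    (H : Matrix n n ℂ) (hH : H.IsHermitian) (S : Matrix n m ℂ) :
    zeroEig (Sᴴ * H * S) =
      zeroIndexOn H (LinearMap.range S.mulVecLin) +
        Module.finrank ℂ (LinearMap.ker S.mulVecLin) := by
  classical
  set T := S.mulVecLin with hT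
  set W := LinearMap.range T with hW
  set K := W ⊓ ⨅ y : W, LinearMap.ker ((dotLeft (star (y : n → ℂ))).comp H.mulVecLin)
    with hK
  have hSH : ∀ v : n → ℂ,
      Sᴴ.mulVec v = 0 ↔ ∀ y ∈ W, star y ⬝ᵥ v = 0 := by
    intro v
    constructor
    · rintro h y ⟨z, rfl⟩
      simp only [hT, mulVecLin_apply]
      rw [star_mulVec, ← dotProduct_mulVec, h, dotProduct_zero]
    · intro h
      funext j
      have := h (S.mulVec (Pi.single j 1)) ⟨Pi.single j 1, rfl⟩
      rw [star_mulVec, ← dotProduct_mulVec] at this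
      simpa [Pi.single_apply, dotProduct] using this
  have hKW : K ≤ W := inf_le_left
  have hker : LinearMap.ker (Sᴴ * H * S).mulVecLin = Submodule.comap T K := by
    ext x
    simp only [LinearMap.mem_ker, Submodule.mem_comap, hK, Submodule.mem_inf,
      Submodule.mem_iInf, LinearMap.mem_ker, LinearMap.comp_apply]
    have hx : (Sᴴ * H * S).mulVecLin x = Sᴴ.mulVec (H.mulVec (T x)) := by
      simp [Matrix.mulVecLin_mul, hT]
    constructor
    · intro h
      refine ⟨⟨x, rfl⟩, ?_⟩
      intro y
      have h0 : Sᴴ.mulVec (H.mulVec (T x)) = 0 := by rw [← hx]; exact h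
      have := (hSH _).mp h0 (y : n → ℂ) y.2
      simpa [dotLeft] using this
    · rintro ⟨-, h2⟩
      rw [hx, hSH]
      rintro y hy
      have := h2 ⟨y, hy⟩
      simpa [dotLeft] using this
  have hdim : Module.finrank ℂ (Submodule.comap T K) =
      Module.finrank ℂ K + Module.finrank ℂ (LinearMap.ker T) := by
    have hmap : Submodule.map T (Submodule.comap T K) = K := by
      rw [Submodule.map_comap_eq, inf_comm]
      exact inf_eq_left.mpr hKW
    have h1 := LinearMap.finrank_range_add_finrank_ker (T.domRestrict (Submodule.comap T K))
    rw [LinearMap.range_domRestrict, hmap, LinearMap.ker_domRestrict] at h1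
    have hle : LinearMap.ker T ≤ Submodule.comap T K := by
      intro x hx
      simp only [Submodule.mem_comap, LinearMap.mem_ker.mp hx]
      exact K.zero_mem
    have h2 : Module.finrank ℂ
        (Submodule.comap (Submodule.comap T K).subtype (LinearMap.ker T)) =
        Module.finrank ℂ (LinearMap.ker T) :=
      (Submodule.comapSubtypeEquivOfLe hle).finrank_eq
    rw [h2] at h1
    exact h1.symm
  rw [zeroEig, hker, hdim, zeroIndexOn]
end

section
/- Let H be a real symmetric n×n matrix strictly supported on the connected graph G and let ψ ∈ ℝ^V be an eigenvector of H with eigenvalue λ having no zero entries. Then n_0([Φ]_{dℝ^V}) = n_0(H − λI) − 1, where dℝ^V ⊆ ℝ^E is the image of the coboundary map d. -/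
open Matrix

section aux
variable {V E : Type*} [Fintype V] [Fintype E] [DecidableEq V] [DecidableEq E]
  (G : OrientedGraph V E)

lemma cob_mulVec (θ : V → ℝ) (e : E) :
    G.cob.mulVec θ e = θ (G.tgt e) - θ (G.src e) := by
  simp [OrientedGraph.cob, Matrix.mulVec, dotProduct, sub_mul,
    Finset.sum_sub_distrib, Finset.sum_ite_eq]

lemma key_sum (H : Matrix V V ℝ) (hsymm : H.IsSymm) (hsupp : G.StrictSupport H)
    (ψ : V → ℝ) (r s : V) (hrs : r ≠ s) :
    ∑ e : E, ((if G.src e = r ∧ G.tgt e = s then (1:ℝ) else 0) +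
      (if G.src e = s ∧ G.tgt e = r then (1:ℝ) else 0)) *
      (ψ (G.src e) * H (G.src e) (G.tgt e) * ψ (G.tgt e)) =
    ψ r * H r s * ψ s := by
  have hsr : H s r = H r s := hsymm.apply r s
  by_cases hH : H r s = 0
  · rw [hH]
    rw [Finset.sum_eq_zero]
    · ring
    intro e _
    by_cases h1 : G.src e = r ∧ G.tgt e = s
    · rw [h1.1, h1.2, hH]; ring
    by_cases h2 : G.src e = s ∧ G.tgt e = r
    · rw [h2.1, h2.2, hsr, hH]; ring
    · simp [h1, h2]
  · obtain ⟨e₀, he₀⟩ := (hsupp r s hrs).mp hH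
    rw [Finset.sum_eq_single e₀]
    · rcases he₀ with ⟨h1, h2⟩ | ⟨h1, h2⟩
      · have : ¬ (G.src e₀ = s ∧ G.tgt e₀ = r) := by
          rintro ⟨h3, h4⟩; exact hrs (h1 ▸ h3 ▸ rfl)
        rw [h1, h2]; simp [this, hrs]
      · have : ¬ (G.src e₀ = r ∧ G.tgt e₀ = s) := by
          rintro ⟨h3, h4⟩; exact hrs (h1 ▸ h3 ▸ rfl)
        rw [h1, h2]; simp [this, hrs, hsr]; ring
    · intro e _ hne
      by_cases h1 : G.src e = r ∧ G.tgt e = s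
      · exfalso; apply hne; apply G.edgeInj e e₀
        rcases he₀ with ⟨h3, h4⟩ | ⟨h3, h4⟩
        · exact Or.inl ⟨h1.1.trans h3.symm, h1.2.trans h4.symm⟩
        · exact Or.inr ⟨h1.1.trans h4.symm, h1.2.trans h3.symm⟩
      by_cases h2 : G.src e = s ∧ G.tgt e = r
      · exfalso; apply hne; apply G.edgeInj e e₀
        rcases he₀ with ⟨h3, h4⟩ | ⟨h3, h4⟩
        · exact Or.inr ⟨h2.1.trans h4.symm, h2.2.trans h3.symm⟩
        · exact Or.inl ⟨h2.1.trans h3.symm, h2.2.trans h4.symm⟩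
      · simp [h1, h2]
    · intro h; exact absurd (Finset.mem_univ e₀) h

end aux


section aux2
set_option linter.unusedSectionVars false
variable {V E : Type*} [Fintype V] [Fintype E] [DecidableEq V] [DecidableEq E]
  (G : OrientedGraph V E)

lemma matrix_identity (H : Matrix V V ℝ) (hsymm : H.IsSymm) (hsupp : G.StrictSupport H)
    (lam : ℝ) (ψ : V → ℝ) (heig : H.mulVec ψ = lam • ψ) :
    G.cobᵀ * PhiMat G H ψ * G.cob =
      Matrix.diagonal ψ * (H - lam • (1 : Matrix V V ℝ)) * Matrix.diagonal ψ := by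
  ext r s
  have hL : (G.cobᵀ * PhiMat G H ψ * G.cob) r s =
      ∑ e : E, G.cob e r * (-(ψ (G.src e) * H (G.src e) (G.tgt e) * ψ (G.tgt e))) * G.cob e s := by
    rw [Matrix.mul_apply]
    congr 1; funext e
    rw [PhiMat, Matrix.mul_diagonal]
    rfl
  have hR : (Matrix.diagonal ψ * (H - lam • (1 : Matrix V V ℝ)) * Matrix.diagonal ψ) r s =
      ψ r * ((H - lam • (1 : Matrix V V ℝ)) r s) * ψ s := by
    rw [Matrix.mul_diagonal, Matrix.diagonal_mul]
  rw [hL, hR]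
  by_cases hrs : r = s
  · subst hrs
    have step1 : ∀ e : E, G.cob e r * (-(ψ (G.src e) * H (G.src e) (G.tgt e) * ψ (G.tgt e))) * G.cob e r =
        ∑ v : V, (-(((if G.src e = r ∧ G.tgt e = v then (1:ℝ) else 0) +
          (if G.src e = v ∧ G.tgt e = r then (1:ℝ) else 0)) *
          (ψ (G.src e) * H (G.src e) (G.tgt e) * ψ (G.tgt e)))) := by
      intro e
      set X := ψ (G.src e) * H (G.src e) (G.tgt e) * ψ (G.tgt e) with hX
      by_cases h1 : G.tgt e = r
      · have h2 : G.src e ≠ r := fun h => G.loopless e (h.trans h1.symm)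
        have hcob : G.cob e r = 1 := by simp [OrientedGraph.cob, h1, h2]
        have hterm : ∀ v : V, (-(((if G.src e = r ∧ G.tgt e = v then (1:ℝ) else 0) +
            (if G.src e = v ∧ G.tgt e = r then (1:ℝ) else 0)) * X)) =
            (if G.src e = v then -X else 0) := by
          intro v
          have hfalse : ¬ (G.src e = r ∧ G.tgt e = v) := fun h => h2 h.1
          by_cases hv : G.src e = v
          · have hvr : ¬ (v = r) := fun h => h2 (hv.trans h)
            simp [hfalse, hv, h1, hvr]
          · simp [hfalse, hv, h1, h2]
        rw [hcob, Finset.sum_congr rfl (fun v _ => hterm v),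
          Finset.sum_ite_eq Finset.univ (G.src e) (fun _ => -X)]
        simp
      · by_cases h2 : G.src e = r
        · have hcob : G.cob e r = -1 := by simp [OrientedGraph.cob, h1, h2]
          have hterm : ∀ v : V, (-(((if G.src e = r ∧ G.tgt e = v then (1:ℝ) else 0) +
              (if G.src e = v ∧ G.tgt e = r then (1:ℝ) else 0)) * X)) =
              (if G.tgt e = v then -X else 0) := by
            intro v
            have hfalse : ¬ (G.src e = v ∧ G.tgt e = r) := fun h => h1 h.2
            by_cases hv : G.tgt e = v
            · have hvr : ¬ (r = v) := fun h => h1 (hv.trans h.symm)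
              simp [hfalse, hv, h2, hvr]
            · simp [hfalse, hv, h2, h1]
          rw [hcob, Finset.sum_congr rfl (fun v _ => hterm v),
            Finset.sum_ite_eq Finset.univ (G.tgt e) (fun _ => -X)]
          simp
        · have hcob : G.cob e r = 0 := by simp [OrientedGraph.cob, h1, h2]
          have h3 : ∀ v : V, ¬ (G.src e = r ∧ G.tgt e = v) := fun v h => h2 h.1
          have h4 : ∀ v : V, ¬ (G.src e = v ∧ G.tgt e = r) := fun v h => h1 h.2
          rw [hcob]
          simp [h3, h4]
    rw [Finset.sum_congr rfl (fun e _ => step1 e), Finset.sum_comm]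
    have step2 : ∀ v : V, (∑ e : E, (-(((if G.src e = r ∧ G.tgt e = v then (1:ℝ) else 0) +
          (if G.src e = v ∧ G.tgt e = r then (1:ℝ) else 0)) *
          (ψ (G.src e) * H (G.src e) (G.tgt e) * ψ (G.tgt e))))) =
        (if v = r then 0 else -(ψ r * H r v * ψ v)) := by
      intro v
      by_cases hv : v = r
      · subst hv
        rw [if_pos rfl, Finset.sum_eq_zero]
        intro e _
        have h3 : ¬ (G.src e = v ∧ G.tgt e = v) := fun h => G.loopless e (h.1.trans h.2.symm)
        simp [h3]
      · rw [if_neg hv]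
        rw [Finset.sum_neg_distrib, key_sum G H hsymm hsupp ψ r v (Ne.symm hv)]
    rw [Finset.sum_congr rfl (fun v _ => step2 v)]
    have hsplit : ∀ v : V, (if v = r then (0:ℝ) else -(ψ r * H r v * ψ v)) =
        (if v = r then ψ r * H r r * ψ r else 0) - ψ r * H r v * ψ v := by
      intro v
      by_cases hv : v = r
      · subst hv; simp
      · simp [hv]
    rw [Finset.sum_congr rfl (fun v _ => hsplit v), Finset.sum_sub_distrib,
      Finset.sum_ite_eq' Finset.univ r (fun _ => ψ r * H r r * ψ r)]
    have hmul : ∑ v : V, ψ r * H r v * ψ v = ψ r * (lam * ψ r) := by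
      have h1 : ∑ v : V, ψ r * H r v * ψ v = ψ r * ∑ v : V, H r v * ψ v := by
        rw [Finset.mul_sum]; congr 1; funext v; ring
      have h2 : ∑ v : V, H r v * ψ v = (H.mulVec ψ) r := rfl
      rw [h1, h2, heig]; rfl
    rw [hmul]
    simp only [Finset.mem_univ, if_true, Matrix.sub_apply, Matrix.smul_apply,
      Matrix.one_apply_eq, smul_eq_mul, mul_one]
    ring
  · -- off-diagonal
    have step1 : ∀ e : E, G.cob e r * (-(ψ (G.src e) * H (G.src e) (G.tgt e) * ψ (G.tgt e))) * G.cob e s =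
        ((if G.src e = r ∧ G.tgt e = s then (1:ℝ) else 0) +
          (if G.src e = s ∧ G.tgt e = r then (1:ℝ) else 0)) *
          (ψ (G.src e) * H (G.src e) (G.tgt e) * ψ (G.tgt e)) := by
      intro e
      have hloop := G.loopless e
      simp only [OrientedGraph.cob, Matrix.of_apply]
      by_cases h1 : G.tgt e = r <;> by_cases h2 : G.src e = r <;>
        by_cases h3 : G.tgt e = s <;> by_cases h4 : G.src e = s <;>
        simp_all <;> ring
    rw [Finset.sum_congr rfl (fun e _ => step1 e), key_sum G H hsymm hsupp ψ r s hrs]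
    have : (H - lam • (1 : Matrix V V ℝ)) r s = H r s := by
      simp [Matrix.sub_apply, Matrix.smul_apply, Matrix.one_apply, hrs]
    rw [this]

end aux2

section aux3
set_option linter.unusedSectionVars false
variable {V E : Type*} [Fintype V] [Fintype E] [DecidableEq V] [DecidableEq E]
  (G : OrientedGraph V E)

lemma ker_cob_finrank (hconn : G.toSimpleGraph.Connected) :
    Module.finrank ℝ (LinearMap.ker G.cob.mulVecLin) = 1 := by
  have hne : Nonempty V := hconn.nonempty
  obtain ⟨v₀⟩ := hne
  have hker : LinearMap.ker G.cob.mulVecLin = Submodule.span ℝ {(fun _ => (1:ℝ) : V → ℝ)} := by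
    apply le_antisymm
    · intro θ hθ
      have hθ' : ∀ e : E, θ (G.tgt e) = θ (G.src e) := by
        intro e
        have h0 : θ (G.tgt e) - θ (G.src e) = 0 := by
          rw [← cob_mulVec G θ e, show G.cob.mulVec θ = 0 from LinearMap.mem_ker.mp hθ]
          rfl
        linarith
      have hadj : ∀ a b : V, G.toSimpleGraph.Adj a b → θ a = θ b := by
        intro a b ⟨e, h⟩
        rcases h with ⟨h1, h2⟩ | ⟨h1, h2⟩
        · rw [← h1, ← h2, hθ' e]
        · rw [← h1, ← h2, hθ' e]
      have hreach : ∀ a b : V, θ a = θ b := by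
        intro a b
        obtain ⟨w⟩ := hconn.preconnected a b
        induction w with
        | nil => rfl
        | cons h p ih => exact (hadj _ _ h).trans ih
      have : θ = θ v₀ • (fun _ => (1:ℝ)) := by
        funext v; simp [hreach v v₀]
      rw [this]
      exact Submodule.smul_mem _ _ (Submodule.mem_span_singleton_self _)
    · rw [Submodule.span_singleton_le_iff_mem, LinearMap.mem_ker]
      funext e
      rw [Matrix.mulVecLin_apply, cob_mulVec]
      simp
  rw [hker]
  exact finrank_span_singleton (by
    intro h
    have := congrFun h v₀
    simp at this)

lemma pairing_identity (Φ : Matrix E E ℝ) (θ η : V → ℝ) :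
    (G.cob.mulVec θ) ⬝ᵥ (Φ.mulVec (G.cob.mulVec η)) =
      θ ⬝ᵥ ((G.cobᵀ * Φ * G.cob).mulVec η) := by
  rw [← Matrix.mulVec_mulVec, ← Matrix.mulVec_mulVec,
    Matrix.dotProduct_mulVec θ, Matrix.dotProduct_mulVec (θ ᵥ* G.cobᵀ),
    Matrix.dotProduct_mulVec (G.cob *ᵥ θ)]
  congr 1
  rw [Matrix.vecMul_transpose]

end aux3

theorem zero_index_compression_coboundary_aux
    {V E : Type*} [Fintype V] [Fintype E] [DecidableEq V] [DecidableEq E]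
    (G : OrientedGraph V E) (hconn : G.toSimpleGraph.Connected)
    (H : Matrix V V ℝ) (hsymm : H.IsSymm) (hsupp : G.StrictSupport H)
    (lam : ℝ) (ψ : V → ℝ) (heig : H.mulVec ψ = lam • ψ) (hψ : ∀ r, ψ r ≠ 0) :
    zeroIndexOn (PhiMat G H ψ) (LinearMap.range G.cob.mulVecLin) + 1 =
      zeroEig (H - lam • (1 : Matrix V V ℝ)) := by
  classical
  set Φ := PhiMat G H ψ with hΦ
  set A := H - lam • (1 : Matrix V V ℝ) with hA
  set M := G.cobᵀ * Φ * G.cob with hM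
  set D := G.cob.mulVecLin with hD
  set W := LinearMap.range D with hW
  set S := LinearMap.ker M.mulVecLin with hS
  -- Step 1: membership characterization
  have hmem : ∀ x : E → ℝ,
      (x ∈ W ⊓ ⨅ y : W, LinearMap.ker ((dotLeft (star (y : E → ℝ))).comp Φ.mulVecLin)) ↔
      (x ∈ W ∧ ∀ θ : V → ℝ, (G.cob.mulVec θ) ⬝ᵥ (Φ.mulVec x) = 0) := by
    intro x
    rw [Submodule.mem_inf]
    constructor
    · rintro ⟨h1, h2⟩
      refine ⟨h1, fun θ => ?_⟩
      have := Submodule.mem_iInf _ |>.mp h2 ⟨D θ, LinearMap.mem_range_self D θ⟩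
      rw [LinearMap.mem_ker] at this
      simp [dotLeft, star_trivial] at this; exact this
    · rintro ⟨h1, h2⟩
      refine ⟨h1, Submodule.mem_iInf _ |>.mpr fun y => ?_⟩
      obtain ⟨θ, hθ⟩ := y.2
      rw [LinearMap.mem_ker]
      have := h2 θ
      simp only [dotLeft, LinearMap.coe_comp, LinearMap.coe_mk, AddHom.coe_mk,
        Function.comp_apply, Matrix.mulVecLin_apply, star_trivial]
      rw [show ((y : E → ℝ)) = G.cob.mulVec θ from hθ ▸ rfl]
      exact this
  -- Step 2: the kernel of the compression is the image of ker M
  have hKmap : (W ⊓ ⨅ y : W, LinearMap.ker ((dotLeft (star (y : E → ℝ))).comp Φ.mulVecLin)) =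
      Submodule.map D S := by
    apply le_antisymm
    · intro x hx
      obtain ⟨⟨η, hη⟩, h2⟩ := (hmem x).mp hx
      refine ⟨η, ?_, hη⟩
      rw [SetLike.mem_coe, LinearMap.mem_ker]
      have hall : ∀ θ : V → ℝ, θ ⬝ᵥ (M.mulVec η) = 0 := by
        intro θ
        rw [← pairing_identity]
        have := h2 θ
        rw [← hη] at this
        exact this
      funext i
      have := hall (Pi.single i 1)
      rw [show (Pi.single i 1 : V → ℝ) ⬝ᵥ (M.mulVec η) = M.mulVec η i from by
        simp [dotProduct, Pi.single_apply, Finset.sum_ite_eq]] at this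
      exact this
    · rintro x ⟨η, hη, rfl⟩
      rw [SetLike.mem_coe] at *
      apply (hmem _).mpr
      refine ⟨LinearMap.mem_range_self D η, fun θ => ?_⟩
      have : D η = G.cob.mulVec η := rfl
      rw [this, pairing_identity, show M.mulVec η = 0 from LinearMap.mem_ker.mp hη]
      simp
  -- Step 3: rank-nullity for D restricted to S
  have hkerD_le : LinearMap.ker D ≤ S := by
    intro θ hθ
    have h0 : G.cob.mulVec θ = 0 := hθ
    show θ ∈ LinearMap.ker M.mulVecLin
    rw [LinearMap.mem_ker]
    show M.mulVec θ = 0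
    rw [hM, ← Matrix.mulVec_mulVec, ← Matrix.mulVec_mulVec, h0]
    simp
  have hrn : Module.finrank ℝ (Submodule.map D S) + Module.finrank ℝ (LinearMap.ker D) =
      Module.finrank ℝ S := by
    let f : S →ₗ[ℝ] (E → ℝ) := D.comp S.subtype
    have h1 : LinearMap.range f = Submodule.map D S := by
      rw [LinearMap.range_comp, Submodule.range_subtype]
    have h2 : LinearMap.ker f = Submodule.comap S.subtype (LinearMap.ker D) := by
      rw [LinearMap.ker_comp]
    have e2 : (LinearMap.ker f : Submodule ℝ S) ≃ₗ[ℝ] LinearMap.ker D :=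
      (LinearEquiv.ofEq _ _ h2).trans (Submodule.comapSubtypeEquivOfLe hkerD_le)
    have h3 : Module.finrank ℝ (LinearMap.ker f) = Module.finrank ℝ (LinearMap.ker D) :=
      LinearEquiv.finrank_eq e2
    have h4 := LinearMap.finrank_range_add_finrank_ker f
    rw [h1, h3] at h4
    exact h4
  -- Step 4: dim ker M = dim ker A
  have hdiag_inv : Matrix.diagonal ψ * Matrix.diagonal (fun v => (ψ v)⁻¹) = 1 := by
    rw [Matrix.diagonal_mul_diagonal,
      show (fun i => ψ i * (ψ i)⁻¹) = fun _ => (1:ℝ) from funext fun v => mul_inv_cancel₀ (hψ v),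
      Matrix.diagonal_one]
  have hdiag_inv' : Matrix.diagonal (fun v => (ψ v)⁻¹) * Matrix.diagonal ψ = 1 := by
    rw [Matrix.diagonal_mul_diagonal,
      show (fun i => (ψ i)⁻¹ * ψ i) = fun _ => (1:ℝ) from funext fun v => inv_mul_cancel₀ (hψ v),
      Matrix.diagonal_one]
  let eψ : (V → ℝ) ≃ₗ[ℝ] (V → ℝ) := LinearEquiv.ofLinear
    (Matrix.diagonal ψ).mulVecLin (Matrix.diagonal (fun v => (ψ v)⁻¹)).mulVecLin
    (by rw [← Matrix.mulVecLin_mul, hdiag_inv, Matrix.mulVecLin_one])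
    (by rw [← Matrix.mulVecLin_mul, hdiag_inv', Matrix.mulVecLin_one])
  have hMker : S = Submodule.comap (eψ : (V → ℝ) →ₗ[ℝ] (V → ℝ))
      (LinearMap.ker A.mulVecLin) := by
    have hMeq : M = Matrix.diagonal ψ * A * Matrix.diagonal ψ :=
      matrix_identity G H hsymm hsupp lam ψ heig
    have hMv : ∀ x : V → ℝ, M.mulVec x =
        (Matrix.diagonal ψ).mulVec (A.mulVec ((Matrix.diagonal ψ).mulVec x)) := by
      intro x
      rw [hMeq, Matrix.mul_assoc, ← Matrix.mulVec_mulVec, ← Matrix.mulVec_mulVec]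
    have hinj : ∀ x : V → ℝ, (Matrix.diagonal ψ).mulVec x = 0 → x = 0 := by
      intro x hx
      funext v
      have := congrFun hx v
      rw [Matrix.mulVec_diagonal] at this
      exact (mul_eq_zero.mp this).resolve_left (hψ v)
    ext θ
    constructor
    · intro hθ
      have h0 : M.mulVec θ = 0 := hθ
      rw [hMv] at h0
      have h1 : A.mulVec ((Matrix.diagonal ψ).mulVec θ) = 0 := hinj _ h0
      rw [Submodule.mem_comap, LinearMap.mem_ker]
      exact h1
    · intro h
      rw [Submodule.mem_comap, LinearMap.mem_ker] at h
      have h' : A.mulVec ((Matrix.diagonal ψ).mulVec θ) = 0 := h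
      show θ ∈ LinearMap.ker M.mulVecLin
      rw [LinearMap.mem_ker]
      show M.mulVec θ = 0
      rw [hMv, h']
      simp
  have hMrank : Module.finrank ℝ S = zeroEig A := by
    rw [hMker, zeroEig]
    rw [Submodule.comap_equiv_eq_map_symm]
    exact (eψ.symm.submoduleMap (LinearMap.ker A.mulVecLin)).symm.finrank_eq
  -- Final assembly
  have hkerD1 : Module.finrank ℝ (LinearMap.ker D) = 1 := ker_cob_finrank G hconn
  rw [zeroIndexOn, hKmap, ← hkerD1, hrn, hMrank]

/-- `n₀([Φ]_{dℝ^V}) = n₀(H - λI) - 1`. -/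
theorem zero_index_compression_coboundary
    {V E : Type*} [Fintype V] [Fintype E] [DecidableEq V] [DecidableEq E]
    (G : OrientedGraph V E) (hconn : G.toSimpleGraph.Connected)
    (H : Matrix V V ℝ) (hsymm : H.IsSymm) (hsupp : G.StrictSupport H)
    (lam : ℝ) (ψ : V → ℝ) (heig : H.mulVec ψ = lam • ψ) (hψ : ∀ r, ψ r ≠ 0) :
    zeroIndexOn (PhiMat G H ψ) (LinearMap.range G.cob.mulVecLin) + 1 =
      zeroEig (H - lam • (1 : Matrix V V ℝ)) :=
  zero_index_compression_coboundary_aux G hconn H hsymm hsupp lam ψ heig hψ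
end

section
/- (Colin de Verdière gauge / Hodge-type splitting.) Let H be a real symmetric n×n matrix strictly supported on the connected graph G, let λ ∈ ℝ and ψ ∈ ℝ^V satisfy Hψ = λψ with dim ker(H − λI) = 1 and ψ_r ≠ 0 for every vertex r. Then ℝ^E is the (not necessarily orthogonal) direct sum ℝ^E = Φ^{-1}Z ⊕ dℝ^V, where Φ^{-1}Z = {Φ^{-1}γ : γ ∈ Z} and dℝ^V is the image of the coboundary map d. -/
open Matrix

section CdVAux

variable {V E : Type*} [Fintype V] [Fintype E] [DecidableEq V] [DecidableEq E]

lemma cdv_exists_unique_edge (G : OrientedGraph V E) {H : Matrix V V ℝ}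
    (hsupp : G.StrictSupport H) {v u : V} (hne : v ≠ u) (hH : H v u ≠ 0) :
    ∃! e : E, (G.src e = v ∧ G.tgt e = u) ∨ (G.src e = u ∧ G.tgt e = v) := by
  obtain ⟨e, he⟩ := (hsupp v u hne).mp hH
  refine ⟨e, he, fun f hf => G.edgeInj f e ?_⟩
  rcases he with ⟨h1, h2⟩ | ⟨h1, h2⟩ <;> rcases hf with ⟨h3, h4⟩ | ⟨h3, h4⟩
  · exact Or.inl ⟨h3.trans h1.symm, h4.trans h2.symm⟩
  · exact Or.inr ⟨h3.trans h2.symm, h4.trans h1.symm⟩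
  · exact Or.inr ⟨h3.trans h2.symm, h4.trans h1.symm⟩
  · exact Or.inl ⟨h3.trans h1.symm, h4.trans h2.symm⟩

lemma cdv_edge_sum (G : OrientedGraph V E) {H : Matrix V V ℝ}
    (hsupp : G.StrictSupport H) (v : V) (h : V → ℝ)
    (hh : ∀ u, h u ≠ 0 → u ≠ v ∧ H v u ≠ 0) :
    ∑ e : E, ((if G.src e = v then h (G.tgt e) else 0) +
              (if G.tgt e = v then h (G.src e) else 0)) = ∑ u : V, h u := by
  classical
  have hrhs : ∑ u : V, h u = ∑ u ∈ Finset.univ.filter (fun u => h u ≠ 0), h u := by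
    refine (Finset.sum_subset (Finset.filter_subset _ _) ?_).symm
    intro u _ hu
    simpa using (fun hne => (hu (Finset.mem_filter.mpr ⟨Finset.mem_univ u, hne⟩)))
  set P : E → Prop := fun e => (G.src e = v ∧ h (G.tgt e) ≠ 0) ∨ (G.tgt e = v ∧ h (G.src e) ≠ 0)
    with hP
  have hlhs : ∑ e : E, ((if G.src e = v then h (G.tgt e) else 0) +
      (if G.tgt e = v then h (G.src e) else 0)) =
      ∑ e ∈ Finset.univ.filter P, ((if G.src e = v then h (G.tgt e) else 0) +
      (if G.tgt e = v then h (G.src e) else 0)) := by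
    refine (Finset.sum_subset (Finset.filter_subset _ _) ?_).symm
    intro e _ he
    have hne : ¬ ((G.src e = v ∧ h (G.tgt e) ≠ 0) ∨ (G.tgt e = v ∧ h (G.src e) ≠ 0)) :=
      fun hp => he (Finset.mem_filter.mpr ⟨Finset.mem_univ e, hp⟩)
    by_cases h1 : G.src e = v <;> by_cases h2 : G.tgt e = v
    · exact absurd (h1.trans h2.symm) (G.loopless e)
    · have h0 : h (G.tgt e) = 0 := not_not.mp fun hx => hne (Or.inl ⟨h1, hx⟩)
      simp [h1, h2, h0]
    · have h0 : h (G.src e) = 0 := not_not.mp fun hx => hne (Or.inr ⟨h2, hx⟩)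
      simp [h1, h2, h0]
    · simp [h1, h2]
  rw [hlhs, hrhs]
  -- bijection between incident edges and neighbours
  refine Finset.sum_bij' (fun e _ => if G.src e = v then G.tgt e else G.src e)
    (fun u hu => Classical.choose (cdv_exists_unique_edge G hsupp
      (Ne.symm (hh u (Finset.mem_filter.mp hu).2).1) (hh u (Finset.mem_filter.mp hu).2).2).exists)
    ?_ ?_ ?_ ?_ ?_
  · -- maps into vertex filter
    intro e he
    obtain ⟨-, hpe⟩ := Finset.mem_filter.mp he
    rcases hpe with ⟨h1, h2⟩ | ⟨h1, h2⟩
    · have : G.tgt e ≠ v := fun hc => G.loopless e (h1.trans hc.symm)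
      simp [h1, h2]
    · have hsne : G.src e ≠ v := fun hc => G.loopless e (hc.trans h1.symm)
      simp [hsne, h2]
  · -- maps into edge filter
    intro u hu
    obtain ⟨-, hu0⟩ := Finset.mem_filter.mp hu
    have hch := Classical.choose_spec (cdv_exists_unique_edge G hsupp
      (Ne.symm (hh u hu0).1) (hh u hu0).2).exists
    refine Finset.mem_filter.mpr ⟨Finset.mem_univ _, ?_⟩
    rcases hch with ⟨h1, h2⟩ | ⟨h1, h2⟩
    · exact Or.inl ⟨h1, by rw [h2]; exact hu0⟩
    · exact Or.inr ⟨h2, by rw [h1]; exact hu0⟩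
  · -- left inverse : j (i e) = e
    intro e he
    obtain ⟨-, hpe⟩ := Finset.mem_filter.mp he
    -- the other endpoint
    set u : V := if G.src e = v then G.tgt e else G.src e with hu
    have hjoin : (G.src e = v ∧ G.tgt e = u) ∨ (G.src e = u ∧ G.tgt e = v) := by
      rcases hpe with ⟨h1, h2⟩ | ⟨h1, h2⟩
      · exact Or.inl ⟨h1, by rw [hu, if_pos h1]⟩
      · have hsne : G.src e ≠ v := fun hc => G.loopless e (hc.trans h1.symm)
        exact Or.inr ⟨by rw [hu, if_neg hsne], h1⟩
    have hu0 : h u ≠ 0 := by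
      rcases hpe with ⟨h1, h2⟩ | ⟨h1, h2⟩
      · rwa [hu, if_pos h1]
      · have hsne : G.src e ≠ v := fun hc => G.loopless e (hc.trans h1.symm)
        rwa [hu, if_neg hsne]
    have hEU := cdv_exists_unique_edge G hsupp (Ne.symm (hh u hu0).1) (hh u hu0).2
    exact hEU.unique (Classical.choose_spec hEU.exists) hjoin
  · -- right inverse : i (j u) = u
    intro u hu
    obtain ⟨-, hu0⟩ := Finset.mem_filter.mp hu
    have hch := Classical.choose_spec (cdv_exists_unique_edge G hsupp
      (Ne.symm (hh u hu0).1) (hh u hu0).2).exists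
    set e := Classical.choose (cdv_exists_unique_edge G hsupp
      (Ne.symm (hh u hu0).1) (hh u hu0).2).exists
    rcases hch with ⟨h1, h2⟩ | ⟨h1, h2⟩
    · show (if G.src e = v then G.tgt e else G.src e) = u
      rw [if_pos h1]; exact h2
    · have hsne : G.src e ≠ v := by
        rw [h1]; exact (hh u hu0).1
      show (if G.src e = v then G.tgt e else G.src e) = u
      rw [if_neg hsne]; exact h1
  · -- values agree
    intro e he
    obtain ⟨-, hpe⟩ := Finset.mem_filter.mp he
    rcases hpe with ⟨h1, h2⟩ | ⟨h1, h2⟩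
    · have htne : G.tgt e ≠ v := fun hc => G.loopless e (h1.trans hc.symm)
      simp only [if_pos h1, if_neg htne, add_zero]
    · have hsne : G.src e ≠ v := fun hc => G.loopless e (hc.trans h1.symm)
      simp only [if_pos h1, if_neg hsne, zero_add]

lemma cdv_key (G : OrientedGraph V E) {H : Matrix V V ℝ}
    (hsymm : H.IsSymm) (hsupp : G.StrictSupport H) {lam : ℝ} {ψ : V → ℝ}
    (heig : H.mulVec ψ = lam • ψ) (θ : V → ℝ) :
    G.cobᵀ.mulVec ((PhiMat G H ψ).mulVec (G.cob.mulVec θ)) =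
      fun v => ψ v * ((H - lam • (1 : Matrix V V ℝ)).mulVec (fun u => ψ u * θ u)) v := by
  funext v
  have hcob : ∀ e, G.cob.mulVec θ e = θ (G.tgt e) - θ (G.src e) := by
    intro e
    simp [OrientedGraph.cob, Matrix.mulVec, dotProduct, sub_mul,
      Finset.sum_sub_distrib]
  have hΦ : ∀ e, (PhiMat G H ψ).mulVec (G.cob.mulVec θ) e =
      -(ψ (G.src e) * H (G.src e) (G.tgt e) * ψ (G.tgt e)) * (θ (G.tgt e) - θ (G.src e)) := by
    intro e
    rw [PhiMat, Matrix.mulVec_diagonal, hcob]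
  set h : V → ℝ := fun u => ψ v * H v u * ψ u * (θ u - θ v) with hh
  have hstep : G.cobᵀ.mulVec ((PhiMat G H ψ).mulVec (G.cob.mulVec θ)) v =
      ∑ e : E, ((if G.src e = v then h (G.tgt e) else 0) +
                (if G.tgt e = v then h (G.src e) else 0)) := by
    rw [Matrix.mulVec, dotProduct]
    refine Finset.sum_congr rfl fun e _ => ?_
    rw [hΦ e]
    by_cases h1 : G.src e = v <;> by_cases h2 : G.tgt e = v
    · exact absurd (h1.trans h2.symm) (G.loopless e)
    · rw [Matrix.transpose_apply]
      simp only [OrientedGraph.cob, Matrix.of_apply, if_pos h1, if_neg h2, hh]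
      rw [h1]
      ring
    · rw [Matrix.transpose_apply]
      simp only [OrientedGraph.cob, Matrix.of_apply, if_pos h2, if_neg h1, hh]
      rw [h2, hsymm.apply v (G.src e)]
      ring
    · rw [Matrix.transpose_apply]
      simp only [OrientedGraph.cob, Matrix.of_apply, if_neg h1, if_neg h2]
      ring
  rw [hstep, cdv_edge_sum G hsupp v h ?side]
  case side =>
    intro u hu
    constructor
    · rintro rfl; exact absurd (by simp [hh]) hu
    · intro hH0; exact absurd (by simp [hh, hH0]) hu
  have hv : ∑ u : V, H v u * ψ u = lam * ψ v := by
    have := congrFun heig v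
    simpa [Matrix.mulVec, dotProduct] using this
  have hsum : ∑ u : V, h u =
      ψ v * ((∑ u : V, H v u * (ψ u * θ u)) - θ v * (∑ u : V, H v u * ψ u)) := by
    simp only [mul_sub, Finset.mul_sum, ← Finset.sum_sub_distrib]
    exact Finset.sum_congr rfl fun u _ => by rw [hh]; ring
  rw [hsum, hv]
  rw [Matrix.sub_mulVec, Matrix.smul_mulVec, Matrix.one_mulVec]
  simp only [Pi.sub_apply, Pi.smul_apply, smul_eq_mul, Matrix.mulVec, dotProduct]
  ring

end CdVAux

/-- the Colin de Verdière gauge / Hodge-type splitting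
`ℝ^E = Φ⁻¹Z ⊕ dℝ^V` (a not-necessarily-orthogonal direct sum). -/
theorem cdv_gauge_splitting
    {V E : Type*} [Fintype V] [Fintype E] [DecidableEq V] [DecidableEq E]
    (G : OrientedGraph V E) (hconn : G.toSimpleGraph.Connected)
    (H : Matrix V V ℝ) (hsymm : H.IsSymm) (hsupp : G.StrictSupport H)
    (lam : ℝ) (ψ : V → ℝ) (heig : H.mulVec ψ = lam • ψ)
    (hker : Module.finrank ℝ (LinearMap.ker (H - lam • (1 : Matrix V V ℝ)).mulVecLin) = 1)
    (hψ : ∀ r, ψ r ≠ 0) :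
    IsCompl (G.cycleSpace.map ((PhiMat G H ψ)⁻¹).mulVecLin)
      (LinearMap.range G.cob.mulVecLin) := by
  classical
  set Φ := PhiMat G H ψ with hΦdef
  have hΦe : ∀ e : E, -(ψ (G.src e) * H (G.src e) (G.tgt e) * ψ (G.tgt e)) ≠ 0 := by
    intro e
    have hne := G.loopless e
    have hH : H (G.src e) (G.tgt e) ≠ 0 :=
      (hsupp _ _ hne).mpr ⟨e, Or.inl ⟨rfl, rfl⟩⟩
    simp [hψ _, hH]
  have hdet : IsUnit Φ.det := by
    rw [hΦdef, PhiMat, Matrix.det_diagonal]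
    rw [isUnit_iff_ne_zero]
    exact Finset.prod_ne_zero_iff.mpr fun e _ => hΦe e
  have hΦΦ : Φ * Φ⁻¹ = 1 := Matrix.mul_nonsing_inv _ hdet
  have hΦΦ' : Φ⁻¹ * Φ = 1 := Matrix.nonsing_inv_mul _ hdet
  -- ψ spans the eigenspace
  have hVne : Nonempty V := by
    by_contra hemp
    have h0 : Module.finrank ℝ (LinearMap.ker (H - lam • (1 : Matrix V V ℝ)).mulVecLin) ≤
        Module.finrank ℝ (V → ℝ) := Submodule.finrank_le _
    rw [hker, Module.finrank_fintype_fun_eq_card] at h0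
    rw [not_nonempty_iff] at hemp
    simp [Fintype.card_eq_zero] at h0
  have hψ0 : ψ ≠ 0 := by
    intro hc
    exact hψ (Classical.arbitrary V) (congrFun hc _)
  have hψmem : ψ ∈ LinearMap.ker (H - lam • (1 : Matrix V V ℝ)).mulVecLin := by
    rw [LinearMap.mem_ker, Matrix.mulVecLin_apply, Matrix.sub_mulVec,
      Matrix.smul_mulVec, Matrix.one_mulVec, heig, sub_self]
  have hspan : Submodule.span ℝ {ψ} =
      LinearMap.ker (H - lam • (1 : Matrix V V ℝ)).mulVecLin := by
    refine Submodule.eq_of_le_of_finrank_le ?_ ?_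
    · rwa [Submodule.span_singleton_le_iff_mem]
    · rw [hker, finrank_span_singleton hψ0]
  -- disjointness
  have hdisj : Disjoint (G.cycleSpace.map ((PhiMat G H ψ)⁻¹).mulVecLin)
      (LinearMap.range G.cob.mulVecLin) := by
    rw [Submodule.disjoint_def]
    intro x hx1 hx2
    obtain ⟨γ, hγ, rfl⟩ := Submodule.mem_map.mp hx1
    obtain ⟨θ, hθ⟩ := LinearMap.mem_range.mp hx2
    rw [OrientedGraph.cycleSpace, LinearMap.mem_ker, Matrix.mulVecLin_apply] at hγ
    have hxγ : Φ.mulVec (Φ⁻¹.mulVecLin γ) = γ := by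
      rw [Matrix.mulVecLin_apply, Matrix.mulVec_mulVec, hΦΦ, Matrix.one_mulVec]
    have hzero : G.cobᵀ.mulVec (Φ.mulVec (G.cob.mulVec θ)) = 0 := by
      rw [← Matrix.mulVecLin_apply G.cob θ, hθ, hxγ, hγ]
    rw [cdv_key G hsymm hsupp heig θ] at hzero
    have hker0 : (fun u => ψ u * θ u) ∈
        LinearMap.ker (H - lam • (1 : Matrix V V ℝ)).mulVecLin := by
      rw [LinearMap.mem_ker, Matrix.mulVecLin_apply]
      funext u
      have := congrFun hzero u
      simp only [Pi.zero_apply] at this ⊢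
      exact (mul_eq_zero.mp this).resolve_left (hψ u)
    rw [← hspan, Submodule.mem_span_singleton] at hker0
    obtain ⟨c, hc⟩ := hker0
    have hθc : ∀ u, θ u = c := by
      intro u
      have := congrFun hc u
      simp only [Pi.smul_apply, smul_eq_mul] at this
      have h2 : ψ u * θ u = ψ u * c := by rw [← this]; ring
      exact (mul_left_cancel₀ (hψ u) h2)
    rw [← hθ]
    rw [Matrix.mulVecLin_apply]
    funext e
    simp [OrientedGraph.cob, Matrix.mulVec, dotProduct, sub_mul,
      Finset.sum_sub_distrib, hθc]
  -- dimensions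
  have hinj : Function.Injective ((PhiMat G H ψ)⁻¹).mulVecLin := by
    intro a b hab
    have h1 := congrArg Φ.mulVec hab
    simpa [Matrix.mulVecLin_apply, Matrix.mulVec_mulVec, ← hΦdef, hΦΦ, Matrix.one_mulVec] using h1
  have hfr1 : Module.finrank ℝ (G.cycleSpace.map ((PhiMat G H ψ)⁻¹).mulVecLin) =
      Module.finrank ℝ G.cycleSpace :=
    (LinearEquiv.finrank_eq (Submodule.equivMapOfInjective _ hinj G.cycleSpace)).symm
  have hrk : Module.finrank ℝ (LinearMap.range (G.cob)ᵀ.mulVecLin) =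
      Module.finrank ℝ (LinearMap.range G.cob.mulVecLin) := by
    have := Matrix.rank_transpose G.cob
    rwa [Matrix.rank, Matrix.rank] at this
  have hre : Module.finrank ℝ (LinearMap.range (G.cob)ᵀ.mulVecLin) +
      Module.finrank ℝ G.cycleSpace = Module.finrank ℝ (E → ℝ) := by
    rw [OrientedGraph.cycleSpace]
    exact LinearMap.finrank_range_add_finrank_ker _
  have hdim : Module.finrank ℝ (G.cycleSpace.map ((PhiMat G H ψ)⁻¹).mulVecLin) +
      Module.finrank ℝ (LinearMap.range G.cob.mulVecLin) = Module.finrank ℝ (E → ℝ) := by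
    rw [hfr1, ← hre, ← hrk]
    ring
  rw [isCompl_iff]
  refine ⟨hdisj, codisjoint_iff.mpr ?_⟩
  exact Submodule.eq_top_of_disjoint _ _ hdim.ge hdisj
end
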